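/- arXiv:1604.02119 — 7 statements merged into one kernel-verified Lean document; each statement's English description precedes it below -/
import Mathlib

section
/- For positive semidefinite ρ, σ on H and a density matrix τ on K, the sandwiched trace functional is invariant under tensoring: Q̃_α(ρ⊗τ‖σ⊗τ) = Q̃_α(ρ‖σ). -/
open scoped Matrix ComplexOrder Kronecker

open Matrix in
lemma diag_conj_isHermitian {m : Type*} [Fintype m] [DecidableEq m]
    (W : Matrix m m ℂ) (d : m → ℝ) :
    (W * Matrix.diagonal (fun i => (d i : ℂ)) * Wᴴ).IsHermitian := by
  have : (Matrix.diagonal (fun i => (d i : ℂ)))ᴴ = Matrix.diagonal (fun i => (d i : ℂ)) := by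
    rw [Matrix.diagonal_conjTranspose]
    congr 1
    ext i
    simp [Pi.star_def]
  unfold Matrix.IsHermitian
  rw [Matrix.conjTranspose_mul, Matrix.conjTranspose_mul, Matrix.conjTranspose_conjTranspose,
    this, mul_assoc]

open Matrix in
lemma cfc_conj_unitary {m : Type*} [Fintype m] [DecidableEq m]
    (W : Matrix m m ℂ) (hW₁ : Wᴴ * W = 1) (hW₂ : W * Wᴴ = 1)
    (d : m → ℝ) (f : ℝ → ℝ) :
    cfc f (W * Matrix.diagonal (fun i => (d i : ℂ)) * Wᴴ)
      = W * Matrix.diagonal (fun i => ((f (d i) : ℝ) : ℂ)) * Wᴴ := by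
  set A := W * Matrix.diagonal (fun i => (d i : ℂ)) * Wᴴ with hAdef
  have hA : A.IsHermitian := diag_conj_isHermitian W d
  have hu : W ∈ unitary (Matrix m m ℂ) := by
    rw [Unitary.mem_iff, Matrix.star_eq_conjTranspose]
    exact ⟨hW₁, hW₂⟩
  set u : unitary (Matrix m m ℂ) := ⟨W, hu⟩ with hudef
  have hAu : A = (u : Matrix m m ℂ) * Matrix.diagonal (fun i => (d i : ℂ)) * (star u : Matrix m m ℂ) := by
    rw [hudef]
    simp [Matrix.star_eq_conjTranspose, hAdef]
  have hspec : spectrum ℝ A = Set.range d := by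
    ext x
    rw [hAu, Unitary.spectrum_star_right_conjugate, ← spectrum.algebraMap_mem_iff ℂ,
      spectrum_diagonal]
    simp
  have hmem : ∀ i, d i ∈ spectrum ℝ A := fun i => hspec ▸ Set.mem_range_self i
  let φ : C(spectrum ℝ A, ℝ) →⋆ₐ[ℝ] Matrix m m ℂ :=
  { toFun := fun g => W * Matrix.diagonal
      (fun i => ((g ⟨d i, hmem i⟩ : ℝ) : ℂ)) * Wᴴ
    map_one' := by
      have h1 : ∀ i : m, (((1 : C(spectrum ℝ A, ℝ)) ⟨d i, hmem i⟩ : ℝ) : ℂ) = 1 := fun i => by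
        simp
      simp only [h1, Matrix.diagonal_one, mul_one, hW₂]
    map_mul' := fun f g => by
      have h : ∀ {a b c e f' : Matrix m m ℂ},
          (a * b * c) * (a * e * f') = a * (b * (c * a) * e) * f' := by
        intro a b c e f'; simp only [mul_assoc]
      rw [h, hW₁, mul_one, Matrix.diagonal_mul_diagonal]
      congr 2 with i
      simp
    map_zero' := by
      simp [Pi.zero_def (M := fun _ : m ↦ ℂ)]
    map_add' := fun f g => by
      simp only [ContinuousMap.coe_add, Pi.add_apply, Complex.ofReal_add,
        ← Matrix.diagonal_add, Matrix.mul_add, Matrix.add_mul]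
    commutes' := fun r => by
      have h3 : ∀ i : m, ((((algebraMap ℝ C(spectrum ℝ A, ℝ)) r) ⟨d i, hmem i⟩ : ℝ) : ℂ)
          = (r : ℂ) := fun i => by simp [Algebra.algebraMap_eq_smul_one]
      have h1 : (Matrix.diagonal (fun _ : m => ((r : ℝ) : ℂ))) = (r : ℂ) • 1 := by
        ext i j
        by_cases h : i = j <;> simp [Matrix.diagonal, Matrix.one_apply, h]
      simp only [h3, h1]
      rw [Matrix.mul_smul, Matrix.smul_mul, mul_one, hW₂]
      ext i j
      by_cases h : i = j <;>
        simp [Matrix.algebraMap_matrix_apply, Matrix.one_apply, h, Algebra.algebraMap_eq_smul_one]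
    map_star' := fun g => by
      simp only [star_trivial]
      rw [Matrix.star_eq_conjTranspose, Matrix.conjTranspose_mul, Matrix.conjTranspose_mul,
        Matrix.conjTranspose_conjTranspose, Matrix.diagonal_conjTranspose, mul_assoc]
      congr 2
      ext i
      simp [Pi.star_def] }
  have hφcont : Continuous φ := by
    have h0 : FiniteDimensional ℝ C(spectrum ℝ A, ℝ) :=
      FiniteDimensional.of_injective (ContinuousMap.coeFnLinearMap ℝ (M := ℝ))
        DFunLike.coe_injective
    exact LinearMap.continuous_of_finiteDimensional φ.toAlgHom.toLinearMap
  have hφid : φ (ContinuousMap.restrict (spectrum ℝ A) (ContinuousMap.id ℝ)) = A := by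
    simp only [φ]
    rfl
  have hA' : IsSelfAdjoint A := hA
  have hcont : ContinuousOn f (spectrum ℝ A) := by
    rw [continuousOn_iff_continuous_restrict]; fun_prop
  rw [cfc_apply f A hA' hcont, cfcHom_eq_of_continuous_of_map_id hA' φ hφcont hφid]
  rfl

/-- Matrix power via the functional calculus: for a Hermitian matrix `A`,
`mpow A r` is `U * diag (eigenvalues ^ r) * Uᴴ` (with the convention
`0 ^ r = 0` for `r ≠ 0`, i.e. powers are taken on the support). -/
noncomputable def mpow {m : Type*} [Fintype m] [DecidableEq m]
    (A : Matrix m m ℂ) (r : ℝ) : Matrix m m ℂ :=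
  if hA : A.IsHermitian then
    (hA.eigenvectorUnitary : Matrix m m ℂ) *
      Matrix.diagonal (fun i => ((hA.eigenvalues i ^ r : ℝ) : ℂ)) *
      (hA.eigenvectorUnitary : Matrix m m ℂ)ᴴ
  else 0

lemma mpow_eq_cfc {m : Type*} [Fintype m] [DecidableEq m]
    {A : Matrix m m ℂ} (hA : A.IsHermitian) (r : ℝ) :
    mpow A r = cfc (fun x : ℝ => x ^ r) A := by
  rw [mpow, dif_pos hA, hA.cfc_eq]
  rw [Matrix.IsHermitian.cfc, Unitary.conjStarAlgAut_apply,
    Matrix.star_eq_conjTranspose]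
  rfl

lemma mpow_conj {m : Type*} [Fintype m] [DecidableEq m]
    (W : Matrix m m ℂ) (hW₁ : Wᴴ * W = 1) (hW₂ : W * Wᴴ = 1)
    (d : m → ℝ) (r : ℝ) :
    mpow (W * Matrix.diagonal (fun i => (d i : ℂ)) * Wᴴ) r
      = W * Matrix.diagonal (fun i => ((d i ^ r : ℝ) : ℂ)) * Wᴴ := by
  rw [mpow_eq_cfc (diag_conj_isHermitian W d) r, cfc_conj_unitary W hW₁ hW₂ d (fun x => x ^ r)]

lemma kron_conjTranspose {m p : Type*} (A : Matrix m m ℂ) (B : Matrix p p ℂ) :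
    (A ⊗ₖ B)ᴴ = Aᴴ ⊗ₖ Bᴴ := by
  ext ⟨i, j⟩ ⟨a, b⟩
  simp [Matrix.conjTranspose_apply, Matrix.kroneckerMap_apply]

lemma conj_mul_conj {m : Type*} [Fintype m] [DecidableEq m] (V P Q : Matrix m m ℂ) (hV : Vᴴ * V = 1) :
    (V * P * Vᴴ) * (V * Q * Vᴴ) = V * (P * Q) * Vᴴ := by
  have h : Vᴴ * (V * (Q * Vᴴ)) = Q * Vᴴ := by rw [← mul_assoc, hV, one_mul]
  simp only [mul_assoc, h]

lemma psd_spectral {m : Type*} [Fintype m] [DecidableEq m] {A : Matrix m m ℂ}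
    (hA : A.IsHermitian) :
    A = (hA.eigenvectorUnitary : Matrix m m ℂ) *
      Matrix.diagonal (fun i => ((hA.eigenvalues i : ℝ) : ℂ)) *
      (hA.eigenvectorUnitary : Matrix m m ℂ)ᴴ := by
  conv_lhs => rw [hA.spectral_theorem]
  rfl

lemma unitary_mul_conjTranspose {m : Type*} [Fintype m] [DecidableEq m]
    (U : Matrix.unitaryGroup m ℂ) : (U : Matrix m m ℂ) * (U : Matrix m m ℂ)ᴴ = 1 := by
  rw [← Matrix.star_eq_conjTranspose]
  exact Matrix.mem_unitaryGroup_iff.mp U.2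

lemma conjTranspose_mul_unitary {m : Type*} [Fintype m] [DecidableEq m]
    (U : Matrix.unitaryGroup m ℂ) : (U : Matrix m m ℂ)ᴴ * (U : Matrix m m ℂ) = 1 := by
  rw [← Matrix.star_eq_conjTranspose]
  exact Matrix.mem_unitaryGroup_iff'.mp U.2

/-- The sandwiched trace functional `Q̃_α(ρ‖σ) = tr[(σ^γ ρ σ^γ)^α]`, with `γ = (1-α)/(2α)`. -/
noncomputable def Qt {m : Type*} [Fintype m] [DecidableEq m]
    (α : ℝ) (ρ σ : Matrix m m ℂ) : ℂ :=
  Matrix.trace (mpow (mpow σ ((1 - α) / (2 * α)) * ρ * mpow σ ((1 - α) / (2 * α))) α)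

/-- `ρ` is a density matrix. -/
def IsDensity {m : Type*} [Fintype m] (ρ : Matrix m m ℂ) : Prop :=
  ρ.PosSemidef ∧ ρ.trace = 1

/-- Invariance of the sandwiched trace functional under tensoring with a fixed state. -/
theorem Qt_tensor_invariance {n k : ℕ}
    (α : ℝ) (hα0 : 0 < α) (hα1 : α ≠ 1)
    (ρ σ : Matrix (Fin n) (Fin n) ℂ) (hρ : ρ.PosSemidef) (hσ : σ.PosSemidef)
    (τ : Matrix (Fin k) (Fin k) ℂ) (hτ : IsDensity τ) :
    Qt α (ρ ⊗ₖ τ) (σ ⊗ₖ τ) = Qt α ρ σ := by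
  obtain ⟨hτpsd, hτtr⟩ := hτ
  have hαne : α ≠ 0 := ne_of_gt hα0
  rw [Qt, Qt]
  set γ : ℝ := (1 - α) / (2 * α) with hγdef
  have hσh : σ.IsHermitian := hσ.1
  have hτh : τ.IsHermitian := hτpsd.1
  set U : Matrix (Fin n) (Fin n) ℂ := (hσh.eigenvectorUnitary : Matrix (Fin n) (Fin n) ℂ)
    with hUdef
  set d : Fin n → ℝ := hσh.eigenvalues with hddef
  set V : Matrix (Fin k) (Fin k) ℂ := (hτh.eigenvectorUnitary : Matrix (Fin k) (Fin k) ℂ)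
    with hVdef
  set e : Fin k → ℝ := hτh.eigenvalues with hedef
  have hd : ∀ i, 0 ≤ d i := fun i => hσ.eigenvalues_nonneg i
  have he : ∀ j, 0 ≤ e j := fun j => hτpsd.eigenvalues_nonneg j
  have hU₁ : Uᴴ * U = 1 := conjTranspose_mul_unitary _
  have hU₂ : U * Uᴴ = 1 := unitary_mul_conjTranspose _
  have hV₁ : Vᴴ * V = 1 := conjTranspose_mul_unitary _
  have hV₂ : V * Vᴴ = 1 := unitary_mul_conjTranspose _
  have hσ_eq : σ = U * Matrix.diagonal (fun i => ((d i : ℝ) : ℂ)) * Uᴴ := psd_spectral hσh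
  have hτ_eq : τ = V * Matrix.diagonal (fun j => ((e j : ℝ) : ℂ)) * Vᴴ := psd_spectral hτh
  have hUV₁ : (U ⊗ₖ V)ᴴ * (U ⊗ₖ V) = 1 := by
    rw [kron_conjTranspose, ← Matrix.mul_kronecker_mul, hU₁, hV₁, Matrix.one_kronecker_one]
  have hUV₂ : (U ⊗ₖ V) * (U ⊗ₖ V)ᴴ = 1 := by
    rw [kron_conjTranspose, ← Matrix.mul_kronecker_mul, hU₂, hV₂, Matrix.one_kronecker_one]
  have hmσ : mpow σ γ = U * Matrix.diagonal (fun i => ((d i ^ γ : ℝ) : ℂ)) * Uᴴ := by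
    conv_lhs => rw [hσ_eq]
    exact mpow_conj U hU₁ hU₂ d γ
  have hmτ : mpow τ γ = V * Matrix.diagonal (fun j => ((e j ^ γ : ℝ) : ℂ)) * Vᴴ := by
    conv_lhs => rw [hτ_eq]
    exact mpow_conj V hV₁ hV₂ e γ
  have hκ : σ ⊗ₖ τ = (U ⊗ₖ V) *
      Matrix.diagonal (fun p : Fin n × Fin k => ((d p.1 * e p.2 : ℝ) : ℂ)) * (U ⊗ₖ V)ᴴ := by
    conv_lhs => rw [hσ_eq, hτ_eq]
    rw [Matrix.mul_kronecker_mul, Matrix.mul_kronecker_mul, Matrix.diagonal_kronecker_diagonal,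
      kron_conjTranspose]
    have hdiag : (Matrix.diagonal fun p : Fin n × Fin k => ((d p.1 : ℂ) * (e p.2 : ℂ)))
        = Matrix.diagonal fun p : Fin n × Fin k => ((d p.1 * e p.2 : ℝ) : ℂ) := by
      rw [Matrix.diagonal_eq_diagonal_iff]
      intro p
      push_cast
      ring
    rw [hdiag]
  have hmκ : mpow (σ ⊗ₖ τ) γ = mpow σ γ ⊗ₖ mpow τ γ := by
    rw [hκ, mpow_conj _ hUV₁ hUV₂, hmσ, hmτ, Matrix.mul_kronecker_mul, Matrix.mul_kronecker_mul,
      Matrix.diagonal_kronecker_diagonal, kron_conjTranspose]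
    have hdiag : (Matrix.diagonal fun p : Fin n × Fin k => (((d p.1 * e p.2 : ℝ) ^ γ : ℝ) : ℂ))
        = Matrix.diagonal fun p : Fin n × Fin k => ((d p.1 ^ γ : ℝ) : ℂ) * ((e p.2 ^ γ : ℝ) : ℂ) := by
      rw [Matrix.diagonal_eq_diagonal_iff]
      intro p
      rw [Real.mul_rpow (hd _) (he _)]
      push_cast
      ring
    rw [hdiag]
  set X := mpow σ γ * ρ * mpow σ γ with hXdef
  have hMherm : (mpow σ γ)ᴴ = mpow σ γ := by
    rw [hmσ]
    exact diag_conj_isHermitian U _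
  have hX : X.PosSemidef := by
    have h := hρ.mul_mul_conjTranspose_same (mpow σ γ)
    rw [hMherm] at h
    exact h
  have hXh : X.IsHermitian := hX.1
  set W : Matrix (Fin n) (Fin n) ℂ := (hXh.eigenvectorUnitary : Matrix (Fin n) (Fin n) ℂ)
    with hWdef
  set x : Fin n → ℝ := hXh.eigenvalues with hxdef
  have hx : ∀ i, 0 ≤ x i := fun i => hX.eigenvalues_nonneg i
  have hW₁ : Wᴴ * W = 1 := conjTranspose_mul_unitary _
  have hW₂ : W * Wᴴ = 1 := unitary_mul_conjTranspose _
  have hX_eq : X = W * Matrix.diagonal (fun i => ((x i : ℝ) : ℂ)) * Wᴴ := psd_spectral hXh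
  have hWV₁ : (W ⊗ₖ V)ᴴ * (W ⊗ₖ V) = 1 := by
    rw [kron_conjTranspose, ← Matrix.mul_kronecker_mul, hW₁, hV₁, Matrix.one_kronecker_one]
  have hWV₂ : (W ⊗ₖ V) * (W ⊗ₖ V)ᴴ = 1 := by
    rw [kron_conjTranspose, ← Matrix.mul_kronecker_mul, hW₂, hV₂, Matrix.one_kronecker_one]
  have hexp1 : γ + 1 + γ = 1 / α := by
    have h2 : (2:ℝ) * α ≠ 0 := by simp [hαne]
    rw [hγdef, div_add' _ _ _ h2, ← add_div, div_eq_div_iff h2 hαne]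
    ring
  have hexp : ∀ y : ℝ, 0 ≤ y → y ^ γ * y * y ^ γ = y ^ (1 / α) := by
    intro y hy
    rcases eq_or_lt_of_le hy with h0 | hpos
    · rw [← h0, Real.zero_rpow (one_div_ne_zero hαne)]
      simp
    · calc y ^ γ * y * y ^ γ = y ^ γ * y ^ (1 : ℝ) * y ^ γ := by rw [Real.rpow_one]
        _ = y ^ (γ + 1 + γ) := by rw [← Real.rpow_add hpos, ← Real.rpow_add hpos]
        _ = y ^ (1 / α) := by rw [hexp1]
  have hT : mpow τ γ * τ * mpow τ γ
      = V * Matrix.diagonal (fun j => ((e j ^ (1 / α) : ℝ) : ℂ)) * Vᴴ := by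
    rw [hmτ]
    conv_lhs => rw [hτ_eq]
    rw [conj_mul_conj V _ _ hV₁, conj_mul_conj V _ _ hV₁, Matrix.diagonal_mul_diagonal,
      Matrix.diagonal_mul_diagonal]
    have hdiag : (Matrix.diagonal fun j : Fin k => ((e j ^ γ : ℝ) : ℂ) * ((e j : ℝ) : ℂ)
          * ((e j ^ γ : ℝ) : ℂ))
        = Matrix.diagonal fun j : Fin k => ((e j ^ (1 / α) : ℝ) : ℂ) := by
      rw [Matrix.diagonal_eq_diagonal_iff]
      intro j
      rw [← hexp (e j) (he j)]
      push_cast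
      ring
    rw [hdiag]
  have hXT : mpow (σ ⊗ₖ τ) γ * (ρ ⊗ₖ τ) * mpow (σ ⊗ₖ τ) γ
      = X ⊗ₖ (V * Matrix.diagonal (fun j => ((e j ^ (1 / α) : ℝ) : ℂ)) * Vᴴ) := by
    rw [hmκ, ← Matrix.mul_kronecker_mul, ← Matrix.mul_kronecker_mul, hT]
  have hXT2 : X ⊗ₖ (V * Matrix.diagonal (fun j => ((e j ^ (1 / α) : ℝ) : ℂ)) * Vᴴ)
      = (W ⊗ₖ V) * Matrix.diagonal
          (fun p : Fin n × Fin k => ((x p.1 * e p.2 ^ (1 / α) : ℝ) : ℂ)) * (W ⊗ₖ V)ᴴ := by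
    conv_lhs => rw [hX_eq]
    rw [Matrix.mul_kronecker_mul, Matrix.mul_kronecker_mul, Matrix.diagonal_kronecker_diagonal,
      kron_conjTranspose]
    have hdiag : (Matrix.diagonal fun p : Fin n × Fin k => ((x p.1 : ℂ) * ((e p.2 ^ (1/α) : ℝ) : ℂ)))
        = Matrix.diagonal fun p : Fin n × Fin k => ((x p.1 * e p.2 ^ (1 / α) : ℝ) : ℂ) := by
      rw [Matrix.diagonal_eq_diagonal_iff]
      intro p
      push_cast
      ring
    rw [hdiag]
  have hmX : mpow X α = W * Matrix.diagonal (fun i => ((x i ^ α : ℝ) : ℂ)) * Wᴴ := by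
    conv_lhs => rw [hX_eq]
    exact mpow_conj W hW₁ hW₂ x α
  have hpow : ∀ y z : ℝ, 0 ≤ y → 0 ≤ z → (y * z ^ (1 / α)) ^ α = y ^ α * z := by
    intro y z hy hz
    rw [Real.mul_rpow hy (Real.rpow_nonneg hz _), ← Real.rpow_mul hz,
      one_div, inv_mul_cancel₀ hαne, Real.rpow_one]
  have hfinal : mpow (X ⊗ₖ (V * Matrix.diagonal (fun j => ((e j ^ (1 / α) : ℝ) : ℂ)) * Vᴴ)) α
      = mpow X α ⊗ₖ τ := by
    rw [hXT2, mpow_conj _ hWV₁ hWV₂, hmX]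
    conv_rhs => rw [hτ_eq]
    rw [Matrix.mul_kronecker_mul, Matrix.mul_kronecker_mul, Matrix.diagonal_kronecker_diagonal,
      kron_conjTranspose]
    have hdiag : (Matrix.diagonal fun p : Fin n × Fin k =>
          (((x p.1 * e p.2 ^ (1 / α) : ℝ) ^ α : ℝ) : ℂ))
        = Matrix.diagonal fun p : Fin n × Fin k => ((x p.1 ^ α : ℝ) : ℂ) * ((e p.2 : ℝ) : ℂ) := by
      rw [Matrix.diagonal_eq_diagonal_iff]
      intro p
      rw [hpow _ _ (hx p.1) (he p.2)]
      push_cast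
      ring
    rw [hdiag]
  rw [hXT, hfinal, Matrix.trace_kronecker, hτtr, mul_one]
end

section
/- For α > 1, the map A ↦ tr(A^{α/(α−1)}) on positive semidefinite matrices is strictly convex. -/
open scoped Matrix ComplexOrder Kronecker

namespace TraceRpowAux

open Matrix

variable {m : Type*} [Fintype m] [DecidableEq m]

lemma entry_NDN (N : Matrix m m ℂ) (d : m → ℂ) (i k : m) :
    (Nᴴ * Matrix.diagonal d * N) i k
      = ∑ j, (starRingEnd ℂ) (N j i) * d j * N j k := by
  rw [Matrix.mul_assoc]
  simp only [Matrix.mul_apply, Matrix.conjTranspose_apply, Matrix.diagonal_apply, ite_mul,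
    zero_mul, Finset.sum_ite_eq, Finset.mem_univ, if_true]
  exact Finset.sum_congr rfl fun j _ => by simp [RCLike.star_def]; ring

omit [DecidableEq m] in
lemma sandwich (V W D : Matrix m m ℂ) :
    star V * (W * D * star W) * V = (star W * V)ᴴ * D * (star W * V) := by
  simp only [star_eq_conjTranspose, conjTranspose_mul, conjTranspose_conjTranspose,
    Matrix.mul_assoc]

lemma diag_entry_re (N : Matrix m m ℂ) (d : m → ℝ) (i : m) :
    (Nᴴ * Matrix.diagonal (fun j => (d j : ℂ)) * N) i i
      = ((∑ j, Complex.normSq (N j i) * d j : ℝ) : ℂ) := by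
  rw [entry_NDN]
  push_cast
  refine Finset.sum_congr rfl fun j _ => ?_
  rw [Complex.normSq_eq_conj_mul_self]
  ring

lemma sum_normSq_col (N : Matrix m m ℂ) (hN : Nᴴ * N = 1) (i : m) :
    ∑ j, Complex.normSq (N j i) = 1 := by
  have h := congrFun (congrFun hN i) i
  simp only [Matrix.mul_apply, Matrix.conjTranspose_apply, Matrix.one_apply_eq] at h
  have : ((∑ j, Complex.normSq (N j i) : ℝ) : ℂ) = 1 := by
    rw [← h]; push_cast
    exact Finset.sum_congr rfl fun j _ => by
      rw [Complex.normSq_eq_conj_mul_self, RCLike.star_def]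
  exact_mod_cast this

lemma sum_normSq_row (N : Matrix m m ℂ) (hN : N * Nᴴ = 1) (j : m) :
    ∑ i, Complex.normSq (N j i) = 1 := by
  have h := congrFun (congrFun hN j) j
  simp only [Matrix.mul_apply, Matrix.conjTranspose_apply, Matrix.one_apply_eq] at h
  have : ((∑ i, Complex.normSq (N j i) : ℝ) : ℂ) = 1 := by
    rw [← h]; push_cast
    exact Finset.sum_congr rfl fun i _ => by
      rw [Complex.normSq_eq_conj_mul_self, RCLike.star_def]; ring
  exact_mod_cast this

lemma reconstruct (N : Matrix m m ℂ) (hN : Nᴴ * N = 1) (d q : m → ℝ)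
    (h : ∀ i j, N j i ≠ 0 → d j = q i) :
    Nᴴ * Matrix.diagonal (fun j => (d j : ℂ)) * N = Matrix.diagonal (fun i => (q i : ℂ)) := by
  ext k i
  rw [entry_NDN]
  have key : ∀ j, (starRingEnd ℂ) (N j k) * (d j : ℂ) * N j i
      = (q i : ℂ) * ((starRingEnd ℂ) (N j k) * N j i) := fun j => by
    by_cases hz : N j i = 0
    · simp [hz]
    · rw [h i j hz]; ring
  rw [Finset.sum_congr rfl fun j _ => key j, ← Finset.mul_sum]
  have h1 : ∑ j, (starRingEnd ℂ) (N j k) * N j i = (Nᴴ * N) k i := by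
    simp [Matrix.mul_apply, Matrix.conjTranspose_apply, RCLike.star_def]
  rw [h1, hN]
  by_cases hk : k = i
  · subst hk; simp
  · simp [Matrix.one_apply_ne hk, Matrix.diagonal_apply_ne _ hk]

lemma mpow_eq {A : Matrix m m ℂ} (hA : A.IsHermitian) (r : ℝ) :
    mpow A r = (hA.eigenvectorUnitary : Matrix m m ℂ) *
      Matrix.diagonal (fun i => ((hA.eigenvalues i ^ r : ℝ) : ℂ)) *
      star (hA.eigenvectorUnitary : Matrix m m ℂ) := by
  rw [mpow, dif_pos hA, star_eq_conjTranspose]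

lemma trace_mpow_re {A : Matrix m m ℂ} (hA : A.IsHermitian) (r : ℝ) :
    (Matrix.trace (mpow A r)).re = ∑ i, hA.eigenvalues i ^ r := by
  rw [mpow_eq hA, Matrix.trace_mul_cycle,
    Unitary.coe_star_mul_self, Matrix.one_mul, Matrix.trace_diagonal]
  rw [← Complex.ofReal_sum]
  exact Complex.ofReal_re _

lemma NN_col (W U : Matrix m m ℂ) (hW : W * star W = 1) (hU : star U * U = 1) :
    (star W * U)ᴴ * (star W * U) = 1 := by
  have : (star W * U)ᴴ = star U * W := by
    simp [star_eq_conjTranspose, conjTranspose_mul]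
  rw [this]
  calc star U * W * (star W * U) = star U * (W * star W) * U := by
        simp only [Matrix.mul_assoc]
    _ = 1 := by rw [hW, Matrix.mul_one, hU]

lemma NN_row (W U : Matrix m m ℂ) (hW : star W * W = 1) (hU : U * star U = 1) :
    (star W * U) * (star W * U)ᴴ = 1 := by
  have : (star W * U)ᴴ = star U * W := by
    simp [star_eq_conjTranspose, conjTranspose_mul]
  rw [this]
  calc star W * U * (star U * W) = star W * (U * star U) * W := by
        simp only [Matrix.mul_assoc]
    _ = 1 := by rw [hU, Matrix.mul_one, hW]

lemma conj_cancel (U M : Matrix m m ℂ) (hU' : U * star U = 1) :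
    U * (star U * M * U) * star U = M := by
  calc U * (star U * M * U) * star U = (U * star U) * M * (U * star U) := by
        simp only [Matrix.mul_assoc]
    _ = M := by rw [hU']; simp

end TraceRpowAux

/-- For `α > 1`, the map `A ↦ tr (A ^ (α/(α-1)))` is strictly convex on
positive semidefinite matrices. -/
theorem trace_rpow_strictConvex {n : ℕ}
    (α : ℝ) (hα : 1 < α)
    (A B : Matrix (Fin n) (Fin n) ℂ) (hA : A.PosSemidef) (hB : B.PosSemidef)
    (hAB : A ≠ B) (l : ℝ) (hl0 : 0 < l) (hl1 : l < 1) :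
    (Matrix.trace (mpow (l • A + (1 - l) • B) (α / (α - 1)))).re
      < l * (Matrix.trace (mpow A (α / (α - 1)))).re
        + (1 - l) * (Matrix.trace (mpow B (α / (α - 1)))).re := by
  classical
  open Matrix TraceRpowAux in
  set p := α / (α - 1) with hpdef
  have hα1 : (0:ℝ) < α - 1 := by linarith
  have hp : 1 < p := by
    rw [hpdef, lt_div_iff₀ hα1]; linarith
  have hl1' : (0:ℝ) < 1 - l := by linarith
  set C := l • A + (1 - l) • B with hCdef
  have hC : C.IsHermitian := by
    have h1 : (l • A)ᴴ = l • A := by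
      rw [Matrix.conjTranspose_smul, star_trivial, hA.1.eq]
    have h2 : ((1 - l) • B)ᴴ = (1 - l) • B := by
      rw [Matrix.conjTranspose_smul, star_trivial, hB.1.eq]
    rw [Matrix.IsHermitian, hCdef, Matrix.conjTranspose_add, h1, h2]
  set U : Matrix (Fin n) (Fin n) ℂ := (hC.eigenvectorUnitary : Matrix (Fin n) (Fin n) ℂ) with hUdef
  have hU : star U * U = 1 := Unitary.coe_star_mul_self _
  have hU' : U * star U = 1 := Unitary.coe_mul_star_self _
  -- data for A
  set WA : Matrix (Fin n) (Fin n) ℂ := (hA.1.eigenvectorUnitary : Matrix (Fin n) (Fin n) ℂ)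
    with hWAdef
  set NA := star WA * U with hNAdef
  have hNAc : NAᴴ * NA = 1 := NN_col _ _ (Unitary.coe_mul_star_self _) hU
  have hNAr : NA * NAᴴ = 1 := NN_row _ _ (Unitary.coe_star_mul_self _) hU'
  set eigA := hA.1.eigenvalues with heigA
  set wA : Fin n → Fin n → ℝ := fun j i => Complex.normSq (NA j i) with hwA
  set qA : Fin n → ℝ := fun i => ∑ j, wA j i * eigA j with hqAdef
  set SA : Fin n → ℝ := fun i => ∑ j, wA j i * eigA j ^ p with hSAdef
  have conjA : star U * A * U = NAᴴ * Matrix.diagonal (fun j => ((eigA j : ℝ) : ℂ)) * NA := by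
    conv_lhs => rw [hA.1.spectral_theorem]
    exact sandwich U WA _
  have conjA' : star U * mpow A p * U
      = NAᴴ * Matrix.diagonal (fun j => ((eigA j ^ p : ℝ) : ℂ)) * NA := by
    conv_lhs => rw [mpow_eq hA.1 p]
    exact sandwich U WA _
  have hqA : ∀ i, (star U * A * U) i i = ((qA i : ℝ) : ℂ) := fun i => by
    rw [conjA, diag_entry_re]
  have hSA : ∀ i, (star U * mpow A p * U) i i = ((SA i : ℝ) : ℂ) := fun i => by
    rw [conjA', diag_entry_re]
  -- data for B
  set WB : Matrix (Fin n) (Fin n) ℂ := (hB.1.eigenvectorUnitary : Matrix (Fin n) (Fin n) ℂ)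
    with hWBdef
  set NB := star WB * U with hNBdef
  have hNBc : NBᴴ * NB = 1 := NN_col _ _ (Unitary.coe_mul_star_self _) hU
  have hNBr : NB * NBᴴ = 1 := NN_row _ _ (Unitary.coe_star_mul_self _) hU'
  set eigB := hB.1.eigenvalues with heigB
  set wB : Fin n → Fin n → ℝ := fun j i => Complex.normSq (NB j i) with hwB
  set qB : Fin n → ℝ := fun i => ∑ j, wB j i * eigB j with hqBdef
  set SB : Fin n → ℝ := fun i => ∑ j, wB j i * eigB j ^ p with hSBdef
  have conjB : star U * B * U = NBᴴ * Matrix.diagonal (fun j => ((eigB j : ℝ) : ℂ)) * NB := by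
    conv_lhs => rw [hB.1.spectral_theorem]
    exact sandwich U WB _
  have conjB' : star U * mpow B p * U
      = NBᴴ * Matrix.diagonal (fun j => ((eigB j ^ p : ℝ) : ℂ)) * NB := by
    conv_lhs => rw [mpow_eq hB.1 p]
    exact sandwich U WB _
  have hqB : ∀ i, (star U * B * U) i i = ((qB i : ℝ) : ℂ) := fun i => by
    rw [conjB, diag_entry_re]
  have hSB : ∀ i, (star U * mpow B p * U) i i = ((SB i : ℝ) : ℂ) := fun i => by
    rw [conjB', diag_entry_re]
  -- eigenvalues of C
  set c := hC.eigenvalues with hcdef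
  have hc : ∀ i, c i = l * qA i + (1 - l) * qB i := by
    intro i
    have h1 : star U * C * U = Matrix.diagonal (RCLike.ofReal ∘ c) :=
      by rw [← hC.conjStarAlgAut_star_eigenvectorUnitary, Unitary.conjStarAlgAut_star_apply]
    have h2 : star U * C * U = l • (star U * A * U) + (1 - l) • (star U * B * U) := by
      rw [hCdef, Matrix.mul_add, Matrix.add_mul, Matrix.mul_smul, Matrix.smul_mul,
        Matrix.mul_smul, Matrix.smul_mul]
    have h3 := congrFun (congrFun (h1.symm.trans h2) i) i
    simp only [Matrix.diagonal_apply_eq, Matrix.add_apply, Matrix.smul_apply,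
      hqA i, hqB i, Function.comp_apply] at h3
    have h4 := congrArg Complex.re h3
    simpa [Complex.real_smul, Complex.mul_re] using h4
  -- nonnegativity
  have heigA0 : ∀ j, 0 ≤ eigA j := fun j => hA.eigenvalues_nonneg j
  have heigB0 : ∀ j, 0 ≤ eigB j := fun j => hB.eigenvalues_nonneg j
  have hwA0 : ∀ j i, 0 ≤ wA j i := fun j i => Complex.normSq_nonneg _
  have hwB0 : ∀ j i, 0 ≤ wB j i := fun j i => Complex.normSq_nonneg _
  have hqA0 : ∀ i, 0 ≤ qA i := fun i =>
    Finset.sum_nonneg fun j _ => mul_nonneg (hwA0 j i) (heigA0 j)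
  have hqB0 : ∀ i, 0 ≤ qB i := fun i =>
    Finset.sum_nonneg fun j _ => mul_nonneg (hwB0 j i) (heigB0 j)
  have hwAs : ∀ i, ∑ j, wA j i = 1 := fun i => sum_normSq_col NA hNAc i
  have hwBs : ∀ i, ∑ j, wB j i = 1 := fun i => sum_normSq_col NB hNBc i
  -- convexity facts
  have hsconv : StrictConvexOn ℝ (Set.Ici 0) (fun x : ℝ => x ^ p) := strictConvexOn_rpow hp
  have hconv := hsconv.convexOn
  -- Jensen / Peierls
  have peierlsA : ∀ i, qA i ^ p ≤ SA i := by
    intro i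
    have := hconv.map_sum_le (t := Finset.univ) (w := fun j => wA j i) (p := eigA)
      (fun j _ => hwA0 j i) (hwAs i) (fun j _ => Set.mem_Ici.2 (heigA0 j))
    simpa [smul_eq_mul, hqAdef, hSAdef] using this
  have peierlsB : ∀ i, qB i ^ p ≤ SB i := by
    intro i
    have := hconv.map_sum_le (t := Finset.univ) (w := fun j => wB j i) (p := eigB)
      (fun j _ => hwB0 j i) (hwBs i) (fun j _ => Set.mem_Ici.2 (heigB0 j))
    simpa [smul_eq_mul, hqBdef, hSBdef] using this
  have eqA : ∀ i, qA i ^ p = SA i → ∀ j, NA j i ≠ 0 → eigA j = qA i := by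
    intro i h j hj
    have h' : (fun x : ℝ => x ^ p) (∑ j, (fun j => wA j i) j • eigA j)
        = ∑ j, (fun j => wA j i) j • (fun x : ℝ => x ^ p) (eigA j) := by
      simpa [smul_eq_mul, hqAdef, hSAdef] using h
    have := (hsconv.map_sum_eq_iff' (t := Finset.univ) (w := fun j => wA j i) (p := eigA)
      (fun j _ => hwA0 j i) (hwAs i) (fun j _ => Set.mem_Ici.2 (heigA0 j))).1 h' j
      (Finset.mem_univ j) (by simpa [hwA, Complex.normSq_eq_zero] using hj)
    simpa [smul_eq_mul, hqAdef] using this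
  have eqB : ∀ i, qB i ^ p = SB i → ∀ j, NB j i ≠ 0 → eigB j = qB i := by
    intro i h j hj
    have h' : (fun x : ℝ => x ^ p) (∑ j, (fun j => wB j i) j • eigB j)
        = ∑ j, (fun j => wB j i) j • (fun x : ℝ => x ^ p) (eigB j) := by
      simpa [smul_eq_mul, hqBdef, hSBdef] using h
    have := (hsconv.map_sum_eq_iff' (t := Finset.univ) (w := fun j => wB j i) (p := eigB)
      (fun j _ => hwB0 j i) (hwBs i) (fun j _ => Set.mem_Ici.2 (heigB0 j))).1 h' j
      (Finset.mem_univ j) (by simpa [hwB, Complex.normSq_eq_zero] using hj)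
    simpa [smul_eq_mul, hqBdef] using this
  -- per-index bounds
  set G : Fin n → ℝ := fun i => (l * qA i + (1 - l) * qB i) ^ p with hGdef
  set F : Fin n → ℝ := fun i => l * SA i + (1 - l) * SB i with hFdef
  have step1 : ∀ i, G i ≤ l * qA i ^ p + (1 - l) * qB i ^ p := by
    intro i
    have := hconv.2 (Set.mem_Ici.2 (hqA0 i)) (Set.mem_Ici.2 (hqB0 i)) hl0.le hl1'.le
      (by ring)
    simpa [smul_eq_mul] using this
  have step2 : ∀ i, l * qA i ^ p + (1 - l) * qB i ^ p ≤ F i := by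
    intro i
    have := add_le_add (mul_le_mul_of_nonneg_left (peierlsA i) hl0.le)
      (mul_le_mul_of_nonneg_left (peierlsB i) hl1'.le)
    simpa [hFdef] using this
  have hle : ∀ i, G i ≤ F i := fun i => (step1 i).trans (step2 i)
  -- existence of strict inequality
  have hex : ∃ i, G i < F i := by
    by_contra hcon
    push_neg at hcon
    have hGF : ∀ i, G i = F i := fun i => le_antisymm (hle i) (hcon i)
    -- all inequalities are equalities
    have hall : ∀ i, qA i = qB i ∧ qA i ^ p = SA i ∧ qB i ^ p = SB i := by
      intro i
      have e1 : G i = l * qA i ^ p + (1 - l) * qB i ^ p :=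
        le_antisymm (step1 i) (by rw [hGF i]; exact step2 i)
      have e2 : l * qA i ^ p + (1 - l) * qB i ^ p = F i := by
        rw [← e1, hGF i]
      simp only [hFdef] at e2
      have h5 : l * qA i ^ p ≤ l * SA i := mul_le_mul_of_nonneg_left (peierlsA i) hl0.le
      have h6 : (1 - l) * qB i ^ p ≤ (1 - l) * SB i :=
        mul_le_mul_of_nonneg_left (peierlsB i) hl1'.le
      have eSA : qA i ^ p = SA i := by
        have h7 : l * qA i ^ p = l * SA i := by linarith
        exact mul_left_cancel₀ (ne_of_gt hl0) h7
      have eSB : qB i ^ p = SB i := by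
        have h7 : (1 - l) * qB i ^ p = (1 - l) * SB i := by linarith
        exact mul_left_cancel₀ (ne_of_gt hl1') h7
      refine ⟨?_, eSA, eSB⟩
      by_contra hne
      have := hsconv.2 (Set.mem_Ici.2 (hqA0 i)) (Set.mem_Ici.2 (hqB0 i)) hne hl0 hl1'
        (by ring)
      rw [smul_eq_mul, smul_eq_mul, smul_eq_mul, smul_eq_mul] at this
      exact absurd e1 (ne_of_lt this)
    -- reconstruct A and B
    have hUA : star U * A * U = Matrix.diagonal (fun i => ((qA i : ℝ) : ℂ)) := by
      rw [conjA]
      exact reconstruct NA hNAc eigA qA fun i j hz => eqA i (hall i).2.1 j hz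
    have hUB : star U * B * U = Matrix.diagonal (fun i => ((qB i : ℝ) : ℂ)) := by
      rw [conjB]
      exact reconstruct NB hNBc eigB qB fun i j hz => eqB i (hall i).2.2 j hz
    have hABeq : star U * A * U = star U * B * U := by
      have hfun : (fun i => ((qA i : ℝ) : ℂ)) = fun i => ((qB i : ℝ) : ℂ) :=
        funext fun i => by rw [(hall i).1]
      rw [hUA, hUB, hfun]
    have : A = B := by
      have h5 := congrArg (fun X => U * X * star U) hABeq
      simpa only [conj_cancel U A hU', conj_cancel U B hU'] using h5
    exact hAB this
  -- trace formulas
  have hLHS : (Matrix.trace (mpow C p)).re = ∑ i, G i := by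
    rw [trace_mpow_re hC p]
    exact Finset.sum_congr rfl fun i _ => by rw [← hcdef, hc i]
  have hTA : (Matrix.trace (mpow A p)).re = ∑ i, SA i := by
    rw [trace_mpow_re hA.1 p]
    rw [hSAdef]
    rw [Finset.sum_comm]
    refine Finset.sum_congr rfl fun j _ => ?_
    rw [← Finset.sum_mul, sum_normSq_row NA hNAr j, one_mul]
  have hTB : (Matrix.trace (mpow B p)).re = ∑ i, SB i := by
    rw [trace_mpow_re hB.1 p]
    rw [hSBdef]
    rw [Finset.sum_comm]
    refine Finset.sum_congr rfl fun j _ => ?_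
    rw [← Finset.sum_mul, sum_normSq_row NB hNBr j, one_mul]
  rw [hLHS, hTA, hTB, Finset.mul_sum, Finset.mul_sum, ← Finset.sum_add_distrib]
  exact Finset.sum_lt_sum (fun i _ => hle i) (hex.imp fun i hi => ⟨Finset.mem_univ i, hi⟩)
end

section
/- Let g : D → ℝ be continuous and strictly convex on an interval D ⊆ ℝ. Then A ↦ tr g(A) is strictly convex on the set of Hermitian matrices with spectrum contained in D. -/
open scoped Matrix ComplexOrder

/-- `tr g(A)` for a Hermitian matrix `A`, defined via the functional calculus
(i.e. as the sum of `g` applied to the eigenvalues of `A`). -/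
noncomputable def trCfc {m : Type*} [Fintype m] [DecidableEq m]
    (g : ℝ → ℝ) (A : Matrix m m ℂ) : ℝ :=
  if hA : A.IsHermitian then ∑ i, g (hA.eigenvalues i) else 0

open Matrix in
/-- Auxiliary lemma: for a Hermitian `A` with spectrum in `D` and any unitary `U`, the
diagonal entries `a i` of `star U * A * U` are real convex combinations of the eigenvalues;
Jensen bounds `g (a i)` by corresponding combinations `c i` of `g` of eigenvalues, whose total
sum is `∑ g (eigenvalues)`; and equality everywhere forces `star U * A * U` to be diagonal. -/
lemma trCfc_aux {n : ℕ} (D : Set ℝ) (hD : Convex ℝ D) (g : ℝ → ℝ)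
    (hg : StrictConvexOn ℝ D g)
    (A : Matrix (Fin n) (Fin n) ℂ) (hA : A.IsHermitian)
    (hspec : ∀ i, hA.eigenvalues i ∈ D)
    (U : Matrix.unitaryGroup (Fin n) ℂ) :
    ∃ a c : Fin n → ℝ,
      (∀ i, a i ∈ D) ∧
      (∀ i, ((star (U : Matrix (Fin n) (Fin n) ℂ)) * A * U) i i = (a i : ℂ)) ∧
      (∀ i, g (a i) ≤ c i) ∧
      (∑ i, c i = ∑ j, g (hA.eigenvalues j)) ∧
      ((∀ i, g (a i) = c i) →
        (star (U : Matrix (Fin n) (Fin n) ℂ)) * A * U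
          = Matrix.diagonal (fun i => (a i : ℂ))) := by
  classical
  set V : Matrix (Fin n) (Fin n) ℂ := (hA.eigenvectorUnitary : Matrix (Fin n) (Fin n) ℂ)
  set W : Matrix (Fin n) (Fin n) ℂ := (star (U : Matrix (Fin n) (Fin n) ℂ)) * V with hW
  have hWmem : W ∈ Matrix.unitaryGroup (Fin n) ℂ :=
    mul_mem (Unitary.star_mem U.2) (hA.eigenvectorUnitary).2
  have hWW : W * star W = 1 := (Matrix.mem_unitaryGroup_iff).mp hWmem
  have hWW' : star W * W = 1 := (Matrix.mem_unitaryGroup_iff').mp hWmem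
  set α : Fin n → ℝ := hA.eigenvalues
  set p : Fin n → Fin n → ℝ := fun i j => Complex.normSq (W i j) with hp
  have hpnn : ∀ i j, 0 ≤ p i j := fun i j => Complex.normSq_nonneg _
  -- row sums are 1
  have hrow : ∀ i, ∑ j, p i j = 1 := by
    intro i
    have h1 : (W * star W) i i = 1 := by rw [hWW]; simp
    rw [Matrix.mul_apply] at h1
    have : ∑ j, ((p i j : ℂ)) = 1 := by
      rw [← h1]
      refine Finset.sum_congr rfl fun j _ => ?_
      simp [hp, Matrix.star_apply, Complex.mul_conj]
    exact_mod_cast (by exact_mod_cast this : ((∑ j, p i j : ℝ) : ℂ) = 1)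
  -- column sums are 1
  have hcol : ∀ j, ∑ i, p i j = 1 := by
    intro j
    have h1 : (star W * W) j j = 1 := by rw [hWW']; simp
    rw [Matrix.mul_apply] at h1
    have : ∑ i, ((p i j : ℂ)) = 1 := by
      rw [← h1]
      refine Finset.sum_congr rfl fun i _ => ?_
      simp [hp, Matrix.star_apply, mul_comm, Complex.mul_conj]
    exact_mod_cast (by exact_mod_cast this : ((∑ i, p i j : ℝ) : ℂ) = 1)
  -- the conjugated matrix
  have hkey : (star (U : Matrix (Fin n) (Fin n) ℂ)) * A * (U : Matrix (Fin n) (Fin n) ℂ)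
      = W * Matrix.diagonal (RCLike.ofReal ∘ α) * star W := by
    conv_lhs => rw [hA.spectral_theorem, Unitary.conjStarAlgAut_apply]
    have hstarW : star W = star V * (U : Matrix (Fin n) (Fin n) ℂ) := by
      rw [hW]; simp [StarMul.star_mul]
    rw [hstarW, hW]
    simp only [Matrix.mul_assoc]
    rfl
  have hentry : ∀ k i,
      ((star (U : Matrix (Fin n) (Fin n) ℂ)) * A * (U : Matrix (Fin n) (Fin n) ℂ)) k i
      = ∑ j, W k j * (α j : ℂ) * (starRingEnd ℂ) (W i j) := by
    intro k i
    rw [hkey, Matrix.mul_apply]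
    refine Finset.sum_congr rfl fun j _ => ?_
    rw [Matrix.mul_diagonal]
    simp [Matrix.star_apply]
  refine ⟨fun i => ∑ j, p i j * α j, fun i => ∑ j, p i j * g (α j), ?_, ?_, ?_, ?_, ?_⟩
  · intro i
    have := hD.sum_mem (t := Finset.univ) (fun j _ => hpnn i j) (hrow i)
      (fun j _ => hspec j)
    simpa [smul_eq_mul] using this
  · intro i
    rw [hentry i i]
    push_cast
    refine Finset.sum_congr rfl fun j _ => ?_
    have : W i j * (starRingEnd ℂ) (W i j) = (p i j : ℂ) := by
      simp [hp, Complex.mul_conj]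
    calc W i j * (α j : ℂ) * (starRingEnd ℂ) (W i j)
        = (W i j * (starRingEnd ℂ) (W i j)) * (α j : ℂ) := by ring
      _ = (p i j : ℂ) * (α j : ℂ) := by rw [this]
  · intro i
    have := hg.convexOn.map_sum_le (t := Finset.univ) (fun j _ => hpnn i j) (hrow i)
      (fun j _ => hspec j)
    simpa [smul_eq_mul] using this
  · rw [Finset.sum_comm]
    refine Finset.sum_congr rfl fun j _ => ?_
    rw [← Finset.sum_mul, hcol j, one_mul]
  · intro heq
    ext k i
    rw [hentry k i, Matrix.diagonal_apply]
    have hjen : ∀ j, p i j ≠ 0 → α j = ∑ j, p i j * α j := by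
      have h := (hg.map_sum_eq_iff' (t := Finset.univ) (w := p i) (p := α)
        (fun j _ => hpnn i j) (hrow i) (fun j _ => hspec j)).mp (by
          simpa [smul_eq_mul] using (heq i))
      intro j hj
      simpa [smul_eq_mul] using h j (Finset.mem_univ j) hj
    have hterm : ∀ j, W k j * (α j : ℂ) * (starRingEnd ℂ) (W i j)
        = W k j * ((∑ j, p i j * α j : ℝ) : ℂ) * (starRingEnd ℂ) (W i j) := by
      intro j
      by_cases hj : p i j = 0
      · have : W i j = 0 := by
          rwa [hp, Complex.normSq_eq_zero] at hj
        simp [this]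
      · rw [hjen j hj]
    rw [Finset.sum_congr rfl fun j _ => hterm j]
    have : ∑ j, W k j * ((∑ j, p i j * α j : ℝ) : ℂ) * (starRingEnd ℂ) (W i j)
        = ((∑ j, p i j * α j : ℝ) : ℂ) * (W * star W) k i := by
      rw [Matrix.mul_apply, Finset.mul_sum]
      refine Finset.sum_congr rfl fun j _ => ?_
      simp [Matrix.star_apply]; ring
    rw [this, hWW]
    by_cases hki : k = i
    · subst hki; simp
    · simp [hki, Matrix.one_apply_ne hki]

/-- If `g` is continuous and strictly convex on an interval `D`, then `A ↦ tr g(A)`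
is strictly convex on Hermitian matrices with spectrum contained in `D`. -/
theorem trCfc_strictConvex {n : ℕ}
    (D : Set ℝ) (hD : Convex ℝ D)
    (g : ℝ → ℝ) (hgc : ContinuousOn g D) (hg : StrictConvexOn ℝ D g)
    (A B : Matrix (Fin n) (Fin n) ℂ)
    (hA : A.IsHermitian) (hB : B.IsHermitian)
    (hspecA : ∀ i, hA.eigenvalues i ∈ D) (hspecB : ∀ i, hB.eigenvalues i ∈ D)
    (hAB : A ≠ B) (l : ℝ) (hl0 : 0 < l) (hl1 : l < 1) :
    trCfc g (l • A + (1 - l) • B)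
      < l * trCfc g A + (1 - l) * trCfc g B := by
  classical
  have hl1' : (0:ℝ) < 1 - l := by linarith
  set C : Matrix (Fin n) (Fin n) ℂ := l • A + (1 - l) • B with hCdef
  have hC : C.IsHermitian := by
    unfold Matrix.IsHermitian
    rw [hCdef, Matrix.conjTranspose_add, Matrix.conjTranspose_smul, Matrix.conjTranspose_smul,
      hA, hB, star_trivial, star_trivial]
  set U := hC.eigenvectorUnitary with hUdef
  set μ : Fin n → ℝ := hC.eigenvalues with hμdef
  have hdiagC : (star (U : Matrix (Fin n) (Fin n) ℂ)) * C * (U : Matrix (Fin n) (Fin n) ℂ)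
      = Matrix.diagonal (RCLike.ofReal ∘ μ) := by
    have := hC.conjStarAlgAut_star_eigenvectorUnitary
    rwa [Unitary.conjStarAlgAut_star_apply] at this
  obtain ⟨a, cA, haD, hadiag, hale, hasum, haeq⟩ :=
    trCfc_aux D hD g hg A hA hspecA U
  obtain ⟨b, cB, hbD, hbdiag, hble, hbsum, hbeq⟩ :=
    trCfc_aux D hD g hg B hB hspecB U
  -- μ i = l * a i + (1 - l) * b i
  have hμ : ∀ i, μ i = l * a i + (1 - l) * b i := by
    intro i
    have h1 : ((star (U : Matrix (Fin n) (Fin n) ℂ)) * C * (U : Matrix (Fin n) (Fin n) ℂ)) i i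
        = (μ i : ℂ) := by
      rw [hdiagC]; simp
    have h2 : (star (U : Matrix (Fin n) (Fin n) ℂ)) * C * (U : Matrix (Fin n) (Fin n) ℂ)
        = l • ((star (U : Matrix (Fin n) (Fin n) ℂ)) * A * (U : Matrix (Fin n) (Fin n) ℂ))
          + (1 - l) • ((star (U : Matrix (Fin n) (Fin n) ℂ)) * B
              * (U : Matrix (Fin n) (Fin n) ℂ)) := by
      rw [hCdef]
      rw [Matrix.mul_add, Matrix.add_mul, Matrix.mul_smul, Matrix.smul_mul,
        Matrix.mul_smul, Matrix.smul_mul]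
    have h3 : (μ i : ℂ) = ((l * a i + (1 - l) * b i : ℝ) : ℂ) := by
      rw [← h1, h2]
      simp only [Matrix.add_apply, Matrix.smul_apply, hadiag i, hbdiag i]
      push_cast
      rw [Complex.real_smul, Complex.real_smul]
      push_cast
      ring
    exact_mod_cast h3
  have hμmem : ∀ i, μ i ∈ D := by
    intro i
    rw [hμ i]
    have := hD (haD i) (hbD i) (le_of_lt hl0) (le_of_lt hl1') (by ring)
    simpa [smul_eq_mul] using this
  -- pointwise convexity
  have h1 : ∀ i, g (μ i) ≤ l * g (a i) + (1 - l) * g (b i) := by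
    intro i
    rw [hμ i]
    have := hg.convexOn.2 (haD i) (hbD i) (le_of_lt hl0) (le_of_lt hl1') (by ring)
    simpa [smul_eq_mul] using this
  have htrC : trCfc g C = ∑ i, g (μ i) := by rw [trCfc, dif_pos hC]
  have htrA : trCfc g A = ∑ j, g (hA.eigenvalues j) := by rw [trCfc, dif_pos hA]
  have htrB : trCfc g B = ∑ j, g (hB.eigenvalues j) := by rw [trCfc, dif_pos hB]
  have hX1 : ∑ i, g (a i) ≤ ∑ i, cA i := Finset.sum_le_sum fun i _ => hale i
  have hX2 : ∑ i, g (b i) ≤ ∑ i, cB i := Finset.sum_le_sum fun i _ => hble i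
  have hS1 : ∑ i, g (μ i) ≤ ∑ i, (l * g (a i) + (1 - l) * g (b i)) :=
    Finset.sum_le_sum fun i _ => h1 i
  have hsplit : ∑ i, (l * g (a i) + (1 - l) * g (b i))
      = l * ∑ i, g (a i) + (1 - l) * ∑ i, g (b i) := by
    rw [Finset.sum_add_distrib, Finset.mul_sum, Finset.mul_sum]
  by_contra hcon
  push_neg at hcon
  rw [htrC, htrA, htrB, ← hasum, ← hbsum] at hcon
  -- everything must be equal
  have hchain1 : ∑ i, g (μ i) ≤ l * ∑ i, g (a i) + (1 - l) * ∑ i, g (b i) := by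
    rw [← hsplit]; exact hS1
  have hchain2 : l * ∑ i, g (a i) + (1 - l) * ∑ i, g (b i)
      ≤ l * ∑ i, cA i + (1 - l) * ∑ i, cB i := by
    have := mul_le_mul_of_nonneg_left hX1 (le_of_lt hl0)
    have := mul_le_mul_of_nonneg_left hX2 (le_of_lt hl1')
    nlinarith
  have heqX1 : ∑ i, g (a i) = ∑ i, cA i := by nlinarith
  have heqX2 : ∑ i, g (b i) = ∑ i, cB i := by nlinarith
  have heqS : ∑ i, g (μ i) = ∑ i, (l * g (a i) + (1 - l) * g (b i)) := by
    rw [hsplit]; nlinarith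
  -- pointwise equalities
  have hptS : ∀ i, g (μ i) = l * g (a i) + (1 - l) * g (b i) := by
    have := (Finset.sum_eq_sum_iff_of_le (fun i _ => h1 i)).mp heqS
    intro i; exact this i (Finset.mem_univ i)
  have hptA : ∀ i, g (a i) = cA i := by
    have := (Finset.sum_eq_sum_iff_of_le (fun i _ => hale i)).mp heqX1
    intro i; exact this i (Finset.mem_univ i)
  have hptB : ∀ i, g (b i) = cB i := by
    have := (Finset.sum_eq_sum_iff_of_le (fun i _ => hble i)).mp heqX2
    intro i; exact this i (Finset.mem_univ i)
  -- a = b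
  have hab : ∀ i, a i = b i := by
    intro i
    by_contra hne
    have hlt := hg.2 (haD i) (hbD i) hne hl0 hl1' (by ring)
    simp only [smul_eq_mul] at hlt
    have h2 := hptS i
    rw [hμ i] at h2
    linarith
  have hAdiag := haeq hptA
  have hBdiag := hbeq hptB
  have hUAB : (star (U : Matrix (Fin n) (Fin n) ℂ)) * A * U
      = (star (U : Matrix (Fin n) (Fin n) ℂ)) * B * U := by
    have hab' : a = b := funext hab
    rw [hAdiag, hBdiag, hab']
  have hUU : (U : Matrix (Fin n) (Fin n) ℂ) * star (U : Matrix (Fin n) (Fin n) ℂ) = 1 :=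
    (Matrix.mem_unitaryGroup_iff).mp U.2
  have hconj : ∀ M : Matrix (Fin n) (Fin n) ℂ,
      (U : Matrix (Fin n) (Fin n) ℂ) * ((star (U : Matrix (Fin n) (Fin n) ℂ)) * M
        * (U : Matrix (Fin n) (Fin n) ℂ)) * star (U : Matrix (Fin n) (Fin n) ℂ) = M := by
    intro M
    calc (U : Matrix (Fin n) (Fin n) ℂ) * ((star (U : Matrix (Fin n) (Fin n) ℂ)) * M
          * (U : Matrix (Fin n) (Fin n) ℂ)) * star (U : Matrix (Fin n) (Fin n) ℂ)
        = ((U : Matrix (Fin n) (Fin n) ℂ) * star (U : Matrix (Fin n) (Fin n) ℂ)) * M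
            * ((U : Matrix (Fin n) (Fin n) ℂ) * star (U : Matrix (Fin n) (Fin n) ℂ)) := by
          simp only [Matrix.mul_assoc]
      _ = M := by rw [hUU, Matrix.one_mul, Matrix.mul_one]
  exact hAB (by rw [← hconj A, ← hconj B, hUAB])
end

section
/- For a fixed positive definite σ and density matrix ρ, and α > 1, the function H ↦ f_α(H, ρ, σ) := α tr(ρH) − (α−1) tr[(σ^{−γ} H σ^{−γ})^{α/(α−1)}] on positive semidefinite H is strictly concave, where γ = (1−α)/(2α). -/
open scoped Matrix ComplexOrder Kronecker

namespace SCAux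
set_option linter.unusedSectionVars false

open Matrix Finset

variable {m : Type*} [Fintype m] [DecidableEq m]

lemma trace_mpow_re {A : Matrix m m ℂ} (hA : A.IsHermitian) (r : ℝ) :
    (Matrix.trace (mpow A r)).re = ∑ i, hA.eigenvalues i ^ r := by
  rw [mpow, dif_pos hA, Matrix.trace_mul_cycle]
  rw [show (hA.eigenvectorUnitary : Matrix m m ℂ)ᴴ * (hA.eigenvectorUnitary : Matrix m m ℂ) = 1 by
    rw [← Matrix.star_eq_conjTranspose]
    exact (Matrix.mem_unitaryGroup_iff').mp hA.eigenvectorUnitary.2, one_mul,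
    Matrix.trace_diagonal]
  rw [Complex.re_sum]
  simp

lemma mpow_isHermitian {A : Matrix m m ℂ} (r : ℝ) : (mpow A r).IsHermitian := by
  rw [mpow]
  split_ifs with hA
  · exact Matrix.isHermitian_mul_mul_conjTranspose _
      (Matrix.isHermitian_diagonal_iff.mpr fun i => by simp [_root_.IsSelfAdjoint, Complex.ext_iff])
  · exact Matrix.isHermitian_zero

lemma psd_diag {X : Matrix m m ℂ} (hX : X.PosSemidef) (i : m) :
    X i i = (((X i i).re : ℝ) : ℂ) ∧ 0 ≤ (X i i).re := by
  have h : (0:ℂ) ≤ X i i := by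
    exact hX.diag_nonneg
  rw [Complex.le_def] at h
  exact ⟨by rw [Complex.ext_iff]; simp [← h.2], by simpa using h.1⟩

lemma smul_posSemidef {X : Matrix m m ℂ} (hX : X.PosSemidef) {l : ℝ} (hl : 0 ≤ l) :
    (l • X).PosSemidef := by
  exact hX.smul hl

/-- Entry formula for `W * diagonal (coe ∘ d) * Wᴴ`. -/
lemma sandwich_apply (W : Matrix m m ℂ) (d : m → ℝ) (i k : m) :
    (W * Matrix.diagonal (fun j => ((d j : ℝ) : ℂ)) * Wᴴ) i k
      = ∑ j, W i j * (d j : ℂ) * (starRingEnd ℂ) (W k j) := by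
  simp [Matrix.mul_apply, Matrix.mul_diagonal, Matrix.conjTranspose_apply, Matrix.diagonal_apply,
    Finset.sum_ite_eq, mul_comm, mul_assoc, mul_left_comm]

/-- Peierls inequality and its strict version for a non-diagonal conjugation. -/
lemma peierls {n : ℕ} {p : ℝ} (hp : 1 < p) {A : Matrix (Fin n) (Fin n) ℂ}
    (hA : A.PosSemidef) {U : Matrix (Fin n) (Fin n) ℂ}
    (hU : U ∈ Matrix.unitaryGroup (Fin n) ℂ) :
    (∑ i, ((Uᴴ * A * U) i i).re ^ p) ≤ (Matrix.trace (mpow A p)).re ∧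
    ((∃ i k, i ≠ k ∧ (Uᴴ * A * U) i k ≠ 0) →
      (∑ i, ((Uᴴ * A * U) i i).re ^ p) < (Matrix.trace (mpow A p)).re) := by
  classical
  have hAh := hA.1
  have hlam : ∀ j, 0 ≤ hAh.eigenvalues j := fun j => hA.eigenvalues_nonneg j
  set W : Matrix (Fin n) (Fin n) ℂ := Uᴴ * (hAh.eigenvectorUnitary : Matrix (Fin n) (Fin n) ℂ)
    with hWdef
  have hWmem : W ∈ Matrix.unitaryGroup (Fin n) ℂ := by
    rw [hWdef, ← Matrix.star_eq_conjTranspose]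
    exact mul_mem (Unitary.star_mem hU) hAh.eigenvectorUnitary.2
  have hWW : W * Wᴴ = 1 := by
    rw [← Matrix.star_eq_conjTranspose]; exact Matrix.mem_unitaryGroup_iff.mp hWmem
  have hWW' : Wᴴ * W = 1 := by
    rw [← Matrix.star_eq_conjTranspose]; exact Matrix.mem_unitaryGroup_iff'.mp hWmem
  have hB : Uᴴ * A * U = W * Matrix.diagonal (fun j => ((hAh.eigenvalues j : ℝ) : ℂ)) * Wᴴ := by
    conv_lhs => rw [hAh.spectral_theorem]
    rw [hWdef]
    simp only [Unitary.conjStarAlgAut_apply, Unitary.coe_star,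
      Matrix.star_eq_conjTranspose, Matrix.conjTranspose_mul,
      Matrix.conjTranspose_conjTranspose, Matrix.mul_assoc]
    rfl
  set w : Fin n → Fin n → ℝ := fun i j => Complex.normSq (W i j) with hwdef
  have hw0 : ∀ i j, 0 ≤ w i j := fun i j => Complex.normSq_nonneg _
  have hrow : ∀ i, ∑ j, w i j = 1 := by
    intro i
    have h : ((∑ j, w i j : ℝ) : ℂ) = ((1 : ℝ) : ℂ) := by
      rw [Complex.ofReal_sum]
      calc (∑ j, ((w i j : ℝ) : ℂ)) = ∑ j, W i j * star (W i j) := by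
            refine Finset.sum_congr rfl fun j _ => ?_
            rw [Complex.star_def, Complex.mul_conj]
        _ = (W * Wᴴ) i i := by simp [Matrix.mul_apply, Matrix.conjTranspose_apply]
        _ = ((1 : ℝ) : ℂ) := by rw [hWW]; simp
    exact_mod_cast h
  have hcol : ∀ j, ∑ i, w i j = 1 := by
    intro j
    have h : ((∑ i, w i j : ℝ) : ℂ) = ((1 : ℝ) : ℂ) := by
      rw [Complex.ofReal_sum]
      calc (∑ i, ((w i j : ℝ) : ℂ)) = ∑ i, star (W i j) * W i j := by
            refine Finset.sum_congr rfl fun i _ => ?_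
            rw [Complex.star_def, mul_comm, Complex.mul_conj]
        _ = (Wᴴ * W) j j := by simp [Matrix.mul_apply, Matrix.conjTranspose_apply]
        _ = ((1 : ℝ) : ℂ) := by rw [hWW']; simp
    exact_mod_cast h
  set a : Fin n → ℝ := fun i => ∑ j, w i j * hAh.eigenvalues j with hadef
  have hBii : ∀ i, (Uᴴ * A * U) i i = ((a i : ℝ) : ℂ) := by
    intro i
    rw [hB, sandwich_apply, hadef, Complex.ofReal_sum]
    refine Finset.sum_congr rfl fun j _ => ?_
    rw [mul_comm (W i j) ((hAh.eigenvalues j : ℂ)), mul_assoc, Complex.mul_conj]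
    push_cast
    ring
  have hdiag : ∀ i, ((Uᴴ * A * U) i i).re = a i := fun i => by rw [hBii i, Complex.ofReal_re]
  have hjen : ∀ i, (a i) ^ p ≤ ∑ j, w i j * hAh.eigenvalues j ^ p := by
    intro i
    have h := (strictConvexOn_rpow hp).convexOn.map_sum_le (t := Finset.univ)
      (w := w i) (p := hAh.eigenvalues) (f := fun x : ℝ => x ^ p)
      (fun j _ => hw0 i j) (hrow i) (fun j _ => Set.mem_Ici.mpr (hlam j))
    simpa [smul_eq_mul, hadef] using h
  have hdouble : ∑ i, ∑ j, w i j * hAh.eigenvalues j ^ p = ∑ j, hAh.eigenvalues j ^ p := by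
    rw [Finset.sum_comm]
    refine Finset.sum_congr rfl fun j _ => ?_
    rw [← Finset.sum_mul, hcol j, one_mul]
  have htr : (Matrix.trace (mpow A p)).re = ∑ j, hAh.eigenvalues j ^ p := trace_mpow_re hAh p
  constructor
  · rw [htr]
    calc ∑ i, ((Uᴴ * A * U) i i).re ^ p = ∑ i, (a i) ^ p := by simp only [hdiag]
      _ ≤ ∑ i, ∑ j, w i j * hAh.eigenvalues j ^ p := Finset.sum_le_sum fun i _ => hjen i
      _ = ∑ j, hAh.eigenvalues j ^ p := hdouble
  · rintro ⟨i0, k0, hik, hBne⟩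
    rw [htr]
    have hstrict : (a i0) ^ p < ∑ j, w i0 j * hAh.eigenvalues j ^ p := by
      rcases lt_or_eq_of_le (hjen i0) with h | h
      · exact h
      · exfalso
        set t : Finset (Fin n) := Finset.univ.filter (fun j => w i0 j ≠ 0) with ht
        have hsub : ∀ (f : Fin n → ℝ), ∑ j ∈ t, w i0 j * f j = ∑ j, w i0 j * f j := by
          intro f
          refine Finset.sum_subset (Finset.subset_univ _) ?_
          intro j _ hj
          rw [ht] at hj
          simp only [Finset.mem_filter, Finset.mem_univ, true_and, not_not] at hj
          rw [hj, zero_mul]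
        have hw1 : ∑ j ∈ t, w i0 j = 1 := by
          calc ∑ j ∈ t, w i0 j = ∑ j ∈ t, w i0 j * 1 := by simp
            _ = ∑ j, w i0 j * 1 := hsub _
            _ = 1 := by simpa using hrow i0
        have hpos : ∀ j ∈ t, 0 < w i0 j := by
          intro j hj
          rw [ht] at hj
          simp only [Finset.mem_filter, Finset.mem_univ, true_and] at hj
          exact lt_of_le_of_ne (hw0 i0 j) (Ne.symm hj)
        have hmem : ∀ j ∈ t, hAh.eigenvalues j ∈ Set.Ici (0 : ℝ) :=
          fun j _ => Set.mem_Ici.mpr (hlam j)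
        have heqsum : ∑ j ∈ t, w i0 j • (hAh.eigenvalues j ^ p)
            ≤ (fun x : ℝ => x ^ p) (∑ j ∈ t, w i0 j • hAh.eigenvalues j) := by
          have e1 : ∑ j ∈ t, w i0 j • hAh.eigenvalues j = a i0 := by
            simp only [smul_eq_mul]; rw [hsub]
          have e2 : ∑ j ∈ t, w i0 j • (hAh.eigenvalues j ^ p)
              = ∑ j, w i0 j * hAh.eigenvalues j ^ p := by
            simp only [smul_eq_mul]; rw [hsub]
          rw [e1, e2]
          simp only []
          rw [h]
        have hconst := (strictConvexOn_rpow hp).eq_of_le_map_sum hpos hw1 hmem heqsum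
        obtain ⟨j0, hj0⟩ : ∃ j, j ∈ t := by
          by_contra hempty
          push_neg at hempty
          rw [Finset.eq_empty_of_forall_notMem hempty] at hw1
          simp at hw1
        apply hBne
        rw [hB, sandwich_apply]
        have hterm : ∀ j : Fin n, W i0 j * ((hAh.eigenvalues j : ℝ) : ℂ) * (starRingEnd ℂ) (W k0 j)
            = ((hAh.eigenvalues j0 : ℝ) : ℂ) * (W i0 j * (starRingEnd ℂ) (W k0 j)) := by
          intro j
          by_cases hz : W i0 j = 0
          · rw [hz]; ring
          · have hjt : j ∈ t := by
              rw [ht]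
              simp only [Finset.mem_filter, Finset.mem_univ, true_and, hwdef]
              exact fun hcontra => hz (Complex.normSq_eq_zero.mp hcontra)
            rw [hconst hjt hj0]
            ring
        rw [Finset.sum_congr rfl (fun j _ => hterm j), ← Finset.mul_sum]
        have hent : ∑ j, W i0 j * (starRingEnd ℂ) (W k0 j) = (W * Wᴴ) i0 k0 := by
          simp [Matrix.mul_apply, Matrix.conjTranspose_apply, Complex.star_def]
        rw [hent, hWW, Matrix.one_apply_ne hik, mul_zero]
    calc ∑ i, ((Uᴴ * A * U) i i).re ^ p = ∑ i, (a i) ^ p := by simp only [hdiag]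
      _ < ∑ i, ∑ j, w i j * hAh.eigenvalues j ^ p :=
          Finset.sum_lt_sum (fun i _ => hjen i) ⟨i0, Finset.mem_univ _, hstrict⟩
      _ = ∑ j, hAh.eigenvalues j ^ p := hdouble

/-- Strict convexity of `X ↦ tr (mpow X p)` on PSD matrices, `p > 1`. -/
lemma trace_mpow_strictConvex {n : ℕ} {p : ℝ} (hp : 1 < p)
    {A B : Matrix (Fin n) (Fin n) ℂ} (hA : A.PosSemidef) (hB : B.PosSemidef)
    (hAB : A ≠ B) {l : ℝ} (hl0 : 0 < l) (hl1 : l < 1) :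
    (Matrix.trace (mpow (l • A + (1 - l) • B) p)).re
      < l * (Matrix.trace (mpow A p)).re + (1 - l) * (Matrix.trace (mpow B p)).re := by
  classical
  have hl1' : (0:ℝ) ≤ 1 - l := by linarith
  set C : Matrix (Fin n) (Fin n) ℂ := l • A + (1 - l) • B with hCdef
  have hC : C.PosSemidef := (smul_posSemidef hA hl0.le).add (smul_posSemidef hB hl1')
  have hCh := hC.1
  set U : Matrix (Fin n) (Fin n) ℂ := (hCh.eigenvectorUnitary : Matrix (Fin n) (Fin n) ℂ)
    with hUdef
  have hU : U ∈ Matrix.unitaryGroup (Fin n) ℂ := hCh.eigenvectorUnitary.2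
  have hUU : U * Uᴴ = 1 := by
    rw [← Matrix.star_eq_conjTranspose]; exact Matrix.mem_unitaryGroup_iff.mp hU
  have hD : Uᴴ * C * U = Matrix.diagonal (fun i => ((hCh.eigenvalues i : ℝ) : ℂ)) := by
    rw [hUdef, ← Matrix.star_eq_conjTranspose]
    have := hCh.conjStarAlgAut_star_eigenvectorUnitary
    simp only [Unitary.conjStarAlgAut_apply, Unitary.coe_star, star_star] at this
    exact this
  have hA' : (Uᴴ * A * U).PosSemidef := hA.conjTranspose_mul_mul_same U
  have hB' : (Uᴴ * B * U).PosSemidef := hB.conjTranspose_mul_mul_same U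
  set a : Fin n → ℝ := fun i => ((Uᴴ * A * U) i i).re with hadef
  set b : Fin n → ℝ := fun i => ((Uᴴ * B * U) i i).re with hbdef
  have ha0 : ∀ i, 0 ≤ a i := fun i => (psd_diag hA' i).2
  have hb0 : ∀ i, 0 ≤ b i := fun i => (psd_diag hB' i).2
  have hsplit : Uᴴ * C * U = l • (Uᴴ * A * U) + (1 - l) • (Uᴴ * B * U) := by
    rw [hCdef]
    simp [Matrix.mul_add, Matrix.add_mul, smul_mul_assoc, mul_smul_comm]
  have heig : ∀ i, hCh.eigenvalues i = l * a i + (1 - l) * b i := by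
    intro i
    have h3 : ((hCh.eigenvalues i : ℝ) : ℂ)
        = l • (Uᴴ * A * U) i i + (1 - l) • (Uᴴ * B * U) i i := by
      calc ((hCh.eigenvalues i : ℝ) : ℂ) = (Uᴴ * C * U) i i := by rw [hD]; simp
        _ = l • (Uᴴ * A * U) i i + (1 - l) • (Uᴴ * B * U) i i := by
            rw [hsplit]; simp [Matrix.add_apply, Matrix.smul_apply]
    have h4 := congrArg Complex.re h3
    simpa [Complex.real_smul, Complex.add_re, Complex.mul_re] using h4
  have htrC : (Matrix.trace (mpow C p)).re = ∑ i, (l * a i + (1 - l) * b i) ^ p := by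
    rw [trace_mpow_re hCh p]
    exact Finset.sum_congr rfl fun i _ => by rw [heig i]
  obtain ⟨hPA, hPA'⟩ := peierls hp hA hU
  obtain ⟨hPB, hPB'⟩ := peierls hp hB hU
  have hconv : ∀ i, (l * a i + (1 - l) * b i) ^ p ≤ l * a i ^ p + (1 - l) * b i ^ p := by
    intro i
    have h := (strictConvexOn_rpow hp).convexOn.2 (Set.mem_Ici.mpr (ha0 i))
      (Set.mem_Ici.mpr (hb0 i)) hl0.le hl1' (show l + (1 - l) = 1 by ring)
    simpa [smul_eq_mul] using h
  by_cases hab : ∀ i, a i = b i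
  · -- equal diagonals: strictness from Peierls
    have hne' : Uᴴ * A * U ≠ Uᴴ * B * U := by
      intro hEq
      apply hAB
      have key : ∀ X : Matrix (Fin n) (Fin n) ℂ, U * (Uᴴ * X * U) * Uᴴ = X := by
        intro X
        calc U * (Uᴴ * X * U) * Uᴴ = (U * Uᴴ) * X * (U * Uᴴ) := by
              simp only [Matrix.mul_assoc]
          _ = X := by rw [hUU]; simp
      calc A = U * (Uᴴ * A * U) * Uᴴ := (key A).symm
        _ = U * (Uᴴ * B * U) * Uᴴ := by rw [hEq]
        _ = B := key B
    have hoff : (∃ i k, i ≠ k ∧ (Uᴴ * A * U) i k ≠ 0)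
        ∨ (∃ i k, i ≠ k ∧ (Uᴴ * B * U) i k ≠ 0) := by
      by_contra hcon
      push_neg at hcon
      obtain ⟨h1, h2⟩ := hcon
      apply hne'
      ext i k
      by_cases hik : i = k
      · subst hik
        rw [(psd_diag hA' i).1, (psd_diag hB' i).1]
        exact congrArg Complex.ofReal (hab i)
      · rw [h1 i k hik, h2 i k hik]
    have hsum_eq : (Matrix.trace (mpow C p)).re = ∑ i, (a i) ^ p := by
      rw [htrC]
      refine Finset.sum_congr rfl fun i _ => ?_
      rw [← hab i]
      congr 1
      ring
    have hbsum : ∑ i, (b i) ^ p = ∑ i, (a i) ^ p :=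
      Finset.sum_congr rfl fun i _ => by rw [hab i]
    rcases hoff with hoA | hoB
    · have hsA := hPA' hoA
      calc (Matrix.trace (mpow C p)).re = ∑ i, (a i) ^ p := hsum_eq
        _ = l * (∑ i, (a i) ^ p) + (1 - l) * (∑ i, (b i) ^ p) := by rw [hbsum]; ring
        _ < l * (Matrix.trace (mpow A p)).re + (1 - l) * (Matrix.trace (mpow B p)).re := by
            have h2 := mul_le_mul_of_nonneg_left hPB hl1'
            have h1 := mul_lt_mul_of_pos_left hsA hl0
            exact add_lt_add_of_lt_of_le h1 h2
    · have hsB := hPB' hoB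
      calc (Matrix.trace (mpow C p)).re = ∑ i, (a i) ^ p := hsum_eq
        _ = l * (∑ i, (a i) ^ p) + (1 - l) * (∑ i, (b i) ^ p) := by rw [hbsum]; ring
        _ < l * (Matrix.trace (mpow A p)).re + (1 - l) * (Matrix.trace (mpow B p)).re := by
            have h1 := mul_le_mul_of_nonneg_left hPA hl0.le
            have h2 := mul_lt_mul_of_pos_left hsB (by linarith : (0:ℝ) < 1 - l)
            exact add_lt_add_of_le_of_lt h1 h2
  · push_neg at hab
    obtain ⟨i1, hi1⟩ := hab
    have hstrict_i : (l * a i1 + (1 - l) * b i1) ^ p < l * a i1 ^ p + (1 - l) * b i1 ^ p := by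
      have h := (strictConvexOn_rpow hp).2 (Set.mem_Ici.mpr (ha0 i1))
        (Set.mem_Ici.mpr (hb0 i1)) hi1 hl0 (show (0:ℝ) < 1 - l by linarith)
        (show l + (1 - l) = 1 by ring)
      simpa [smul_eq_mul] using h
    calc (Matrix.trace (mpow C p)).re = ∑ i, (l * a i + (1 - l) * b i) ^ p := htrC
      _ < ∑ i, (l * a i ^ p + (1 - l) * b i ^ p) :=
          Finset.sum_lt_sum (fun i _ => hconv i) ⟨i1, Finset.mem_univ _, hstrict_i⟩
      _ = l * (∑ i, a i ^ p) + (1 - l) * (∑ i, b i ^ p) := by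
          rw [Finset.sum_add_distrib, ← Finset.mul_sum, ← Finset.mul_sum]
      _ ≤ l * (Matrix.trace (mpow A p)).re + (1 - l) * (Matrix.trace (mpow B p)).re :=
          add_le_add (mul_le_mul_of_nonneg_left hPA hl0.le)
            (mul_le_mul_of_nonneg_left hPB hl1')

end SCAux

/-- The variational functional
`f_α(H,ρ,σ) = α tr(ρH) − (α−1) tr[(σ^{−γ} H σ^{−γ})^{α/(α−1)}]`, `γ = (1−α)/(2α)`. -/
noncomputable def fAlpha {m : Type*} [Fintype m] [DecidableEq m]
    (α : ℝ) (H ρ σ : Matrix m m ℂ) : ℝ :=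
  α * (Matrix.trace (ρ * H)).re
    - (α - 1) * (Matrix.trace (mpow
        (mpow σ (-((1 - α) / (2 * α))) * H * mpow σ (-((1 - α) / (2 * α))))
        (α / (α - 1)))).re

/-- For `α > 1`, fixed positive definite `σ` and density matrix `ρ`, the map
`H ↦ f_α(H,ρ,σ)` is strictly concave on positive semidefinite matrices. -/
theorem fAlpha_strictConcave {n : ℕ}
    (α : ℝ) (hα : 1 < α)
    (ρ σ : Matrix (Fin n) (Fin n) ℂ) (hρ : IsDensity ρ) (hσ : σ.PosDef)
    (H₁ H₂ : Matrix (Fin n) (Fin n) ℂ)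
    (hH₁ : H₁.PosSemidef) (hH₂ : H₂.PosSemidef) (hne : H₁ ≠ H₂)
    (l : ℝ) (hl0 : 0 < l) (hl1 : l < 1) :
    l * fAlpha α H₁ ρ σ + (1 - l) * fAlpha α H₂ ρ σ
      < fAlpha α (l • H₁ + (1 - l) • H₂) ρ σ := by
  classical
  have hα1 : (0:ℝ) < α - 1 := by linarith
  simp only [fAlpha]
  set M : Matrix (Fin n) (Fin n) ℂ := mpow σ (-((1 - α) / (2 * α))) with hM
  set p : ℝ := α / (α - 1) with hpdef
  have hp : 1 < p := by
    rw [hpdef]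
    rw [one_lt_div hα1]
    linarith
  have hMh : M.IsHermitian := SCAux.mpow_isHermitian _
  have hpsd : ∀ {H : Matrix (Fin n) (Fin n) ℂ}, H.PosSemidef → (M * H * M).PosSemidef := by
    intro H hH
    have h := hH.conjTranspose_mul_mul_same M
    rwa [hMh.eq] at h
  have hA : (M * H₁ * M).PosSemidef := hpsd hH₁
  have hB : (M * H₂ * M).PosSemidef := hpsd hH₂
  -- M is invertible
  have hMdet : M.det ≠ 0 := by
    rw [hM, mpow, dif_pos hσ.1]
    rw [Matrix.det_mul, Matrix.det_mul, Matrix.det_diagonal]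
    have hVu := Matrix.det_of_mem_unitary hσ.1.eigenvectorUnitary.2
    have hVdet : ((hσ.1.eigenvectorUnitary : Matrix (Fin n) (Fin n) ℂ)).det ≠ 0 := by
      intro hz
      have h1 := (Unitary.mem_iff.mp hVu).1
      rw [hz] at h1
      simp at h1
    refine mul_ne_zero (mul_ne_zero hVdet ?_) ?_
    · rw [Finset.prod_ne_zero_iff]
      intro i _
      simp only [ne_eq, Complex.ofReal_eq_zero]
      exact ne_of_gt (Real.rpow_pos_of_pos (hσ.eigenvalues_pos i) _)
    · rw [Matrix.det_conjTranspose]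
      exact star_ne_zero.mpr hVdet
  haveI : Invertible M := M.invertibleOfIsUnitDet (isUnit_iff_ne_zero.mpr hMdet)
  have hABne : M * H₁ * M ≠ M * H₂ * M := by
    intro h
    apply hne
    rw [Matrix.mul_assoc, Matrix.mul_assoc] at h
    have h2 := Matrix.mul_right_injective_of_invertible M h
    exact Matrix.mul_left_injective_of_invertible M h2
  have hlin : M * (l • H₁ + (1 - l) • H₂) * M
      = l • (M * H₁ * M) + (1 - l) • (M * H₂ * M) := by
    simp [Matrix.mul_add, Matrix.add_mul, smul_mul_assoc, mul_smul_comm]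
  have htl : (Matrix.trace (ρ * (l • H₁ + (1 - l) • H₂))).re
      = l * (Matrix.trace (ρ * H₁)).re + (1 - l) * (Matrix.trace (ρ * H₂)).re := by
    rw [Matrix.mul_add, Matrix.trace_add, mul_smul_comm, mul_smul_comm,
      Matrix.trace_smul, Matrix.trace_smul]
    simp [Complex.real_smul, Complex.add_re, Complex.mul_re]
  have hmain := SCAux.trace_mpow_strictConvex hp hA hB hABne hl0 hl1
  rw [hlin, htl]
  nlinarith [mul_lt_mul_of_pos_left hmain hα1]
end

section
/- For α > 1, positive definite σ, and density matrix ρ, the supremum over positive semidefinite H of f_α(H,ρ,σ) = α tr(ρH) − (α−1) tr[(σ^{−γ} H σ^{−γ})^{α/(α−1)}] equals Q̃_α(ρ‖σ) = tr[(σ^γ ρ σ^γ)^α], and is attained at Ĥ = σ^γ (σ^γ ρ σ^γ)^{α−1} σ^γ, with γ = (1−α)/(2α). -/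
open scoped Matrix ComplexOrder Kronecker

namespace QAux

open Matrix Polynomial

variable {m : Type*} [Fintype m] [DecidableEq m]

/-- conjugation by a unitary as an ℝ-algebra hom -/
noncomputable def conjAH (U : Matrix.unitaryGroup m ℂ) : Matrix m m ℂ →ₐ[ℝ] Matrix m m ℂ where
  toFun B := (U : Matrix m m ℂ) * B * star (U : Matrix m m ℂ)
  map_one' := by
    show (U : Matrix m m ℂ) * 1 * star (U : Matrix m m ℂ) = 1
    rw [mul_one]; exact Matrix.mem_unitaryGroup_iff.mp U.2
  map_mul' B C := by
    have h : star (U : Matrix m m ℂ) * (U : Matrix m m ℂ) = 1 :=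
      Matrix.mem_unitaryGroup_iff'.mp U.2
    show (U : Matrix m m ℂ) * (B * C) * star (U : Matrix m m ℂ) = _
    refine Eq.symm ?_
    calc ((U : Matrix m m ℂ) * B * star (U : Matrix m m ℂ)) *
          ((U : Matrix m m ℂ) * C * star (U : Matrix m m ℂ))
        = (U : Matrix m m ℂ) * B * ((star (U : Matrix m m ℂ) * (U : Matrix m m ℂ)) *
            (C * star (U : Matrix m m ℂ))) := by
          simp only [mul_assoc]
      _ = (U : Matrix m m ℂ) * (B * C) * star (U : Matrix m m ℂ) := by
          rw [h, one_mul]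
          simp only [mul_assoc]
  map_zero' := by simp
  map_add' B C := by
    show (U : Matrix m m ℂ) * (B + C) * star (U : Matrix m m ℂ) = _
    rw [Matrix.mul_add, Matrix.add_mul]
  commutes' r := by
    show (U : Matrix m m ℂ) * (algebraMap ℝ (Matrix m m ℂ) r) * star (U : Matrix m m ℂ) = _
    simp only [Algebra.algebraMap_eq_smul_one, mul_smul_comm, smul_mul_assoc, mul_one,
      Matrix.mem_unitaryGroup_iff.mp U.2]

lemma aeval_conj (U : Matrix.unitaryGroup m ℂ) (B : Matrix m m ℂ) (p : ℝ[X]) :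
    aeval ((U : Matrix m m ℂ) * B * star (U : Matrix m m ℂ)) p
      = (U : Matrix m m ℂ) * aeval B p * star (U : Matrix m m ℂ) :=
  aeval_algHom_apply (conjAH U) B p

lemma aeval_diag (d : m → ℝ) (p : ℝ[X]) :
    aeval (Matrix.diagonal (fun i => (d i : ℂ))) p
      = Matrix.diagonal (fun i => ((p.eval (d i) : ℝ) : ℂ)) := by
  have h1 : Matrix.diagonal (fun i => (d i : ℂ))
      = Matrix.diagonalAlgHom (α := ℂ) ℝ (fun i => (d i : ℂ)) := rfl
  rw [h1, aeval_algHom_apply]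
  have h2 : aeval (fun i => (d i : ℂ)) p = fun i => ((p.eval (d i) : ℝ) : ℂ) := by
    funext i
    have e1 : aeval (fun i => (d i : ℂ)) p i = aeval ((d i : ℂ)) p :=
      (aeval_algHom_apply (Pi.evalAlgHom ℝ (fun _ => ℂ) i) (fun j => ((d j : ℂ))) p).symm
    rw [e1]
    simpa using aeval_algHom_apply Complex.ofRealAm (d i) p
  rw [h2]
  rfl

lemma mpow_spec {A : Matrix m m ℂ} (hA : A.IsHermitian) (r : ℝ) :
    mpow A r = (hA.eigenvectorUnitary : Matrix m m ℂ) *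
      Matrix.diagonal (fun i => ((hA.eigenvalues i ^ r : ℝ) : ℂ)) *
      star (hA.eigenvectorUnitary : Matrix m m ℂ) := by
  rw [mpow, dif_pos hA, Matrix.star_eq_conjTranspose]

lemma herm_decomp {A : Matrix m m ℂ} (hA : A.IsHermitian) :
    A = (hA.eigenvectorUnitary : Matrix m m ℂ) *
      Matrix.diagonal (fun i => ((hA.eigenvalues i : ℝ) : ℂ)) *
      star (hA.eigenvectorUnitary : Matrix m m ℂ) := by
  have := hA.spectral_theorem
  rw [Unitary.conjStarAlgAut_apply] at this
  exact this

lemma mpow_eq_conj {B : Matrix m m ℂ} (U : Matrix.unitaryGroup m ℂ) (d : m → ℝ)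
    (hB : B = (U : Matrix m m ℂ) * Matrix.diagonal (fun i => (d i : ℂ)) *
      star (U : Matrix m m ℂ)) (r : ℝ) :
    mpow B r = (U : Matrix m m ℂ) *
      Matrix.diagonal (fun i => ((d i ^ r : ℝ) : ℂ)) * star (U : Matrix m m ℂ) := by
  have hH : B.IsHermitian := by
    rw [hB, Matrix.star_eq_conjTranspose]
    exact Matrix.isHermitian_mul_mul_conjTranspose _
      (Matrix.isHermitian_diagonal_iff.mpr fun i => Complex.conj_ofReal (d i))
  classical
  set U' : Matrix.unitaryGroup m ℂ := hH.eigenvectorUnitary with hU'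
  set lam : m → ℝ := hH.eigenvalues with hlam
  set t : Finset ℝ := Finset.univ.image d ∪ Finset.univ.image lam with ht
  set p : ℝ[X] := Lagrange.interpolate t id (fun x : ℝ => x ^ r) with hp
  have hinj : Set.InjOn (id : ℝ → ℝ) t := Function.injective_id.injOn
  have hevalp : ∀ x ∈ t, p.eval x = x ^ r := fun x hx =>
    Lagrange.eval_interpolate_at_node (fun x : ℝ => x ^ r) hinj hx
  have key : ∀ (V : Matrix.unitaryGroup m ℂ) (e : m → ℝ), (∀ i, e i ∈ t) →
      aeval ((V : Matrix m m ℂ) * Matrix.diagonal (fun i => (e i : ℂ)) *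
        star (V : Matrix m m ℂ)) p
      = (V : Matrix m m ℂ) * Matrix.diagonal (fun i => ((e i ^ r : ℝ) : ℂ)) *
        star (V : Matrix m m ℂ) := by
    intro V e he
    have hfun : (fun i => ((p.eval (e i) : ℝ) : ℂ)) = fun i => ((e i ^ r : ℝ) : ℂ) := by
      funext i; rw [hevalp (e i) (he i)]
    rw [aeval_conj, aeval_diag, hfun]
  have hd : ∀ i, d i ∈ t := fun i => Finset.mem_union_left _
    (Finset.mem_image_of_mem d (Finset.mem_univ i))
  have hl : ∀ i, lam i ∈ t := fun i => Finset.mem_union_right _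
    (Finset.mem_image_of_mem lam (Finset.mem_univ i))
  have h1 := key U' lam hl
  have h2 := key U d hd
  rw [← herm_decomp hH] at h1
  rw [← hB] at h2
  rw [mpow_spec hH, ← h1, h2]


lemma conj_mul (U : Matrix.unitaryGroup m ℂ) (B C : Matrix m m ℂ) :
    ((U : Matrix m m ℂ) * B * star (U : Matrix m m ℂ)) *
      ((U : Matrix m m ℂ) * C * star (U : Matrix m m ℂ))
      = (U : Matrix m m ℂ) * (B * C) * star (U : Matrix m m ℂ) :=
  (map_mul (conjAH U) B C).symm

lemma trace_conj (U : Matrix.unitaryGroup m ℂ) (M : Matrix m m ℂ) :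
    Matrix.trace ((U : Matrix m m ℂ) * M * star (U : Matrix m m ℂ)) = Matrix.trace M := by
  rw [Matrix.trace_mul_comm, ← mul_assoc, Matrix.mem_unitaryGroup_iff'.mp U.2, one_mul]

lemma trace_mpow {A : Matrix m m ℂ} (hA : A.IsHermitian) (r : ℝ) :
    Matrix.trace (mpow A r) = ((∑ i, hA.eigenvalues i ^ r : ℝ) : ℂ) := by
  rw [mpow_spec hA, trace_conj, Matrix.trace_diagonal]
  push_cast
  rfl

lemma mpow_isHermitian {A : Matrix m m ℂ} (hA : A.IsHermitian) (r : ℝ) :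
    (mpow A r).IsHermitian := by
  rw [mpow_spec hA, Matrix.star_eq_conjTranspose]
  exact Matrix.isHermitian_mul_mul_conjTranspose _
    (Matrix.isHermitian_diagonal_iff.mpr fun i => Complex.conj_ofReal _)

lemma mpow_add {σ : Matrix m m ℂ} (hσ : σ.PosDef) (a b : ℝ) :
    mpow σ a * mpow σ b = mpow σ (a + b) := by
  simp only [mpow_spec hσ.1]
  rw [conj_mul, Matrix.diagonal_mul_diagonal]
  have hfun : (fun i => ((hσ.1.eigenvalues i ^ a : ℝ) : ℂ) * ((hσ.1.eigenvalues i ^ b : ℝ) : ℂ))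
      = fun i => ((hσ.1.eigenvalues i ^ (a + b) : ℝ) : ℂ) := by
    funext i
    rw [← Complex.ofReal_mul, ← Real.rpow_add (hσ.eigenvalues_pos i)]
  rw [hfun]

lemma mpow_zero {A : Matrix m m ℂ} (hA : A.IsHermitian) : mpow A 0 = 1 := by
  rw [mpow_spec hA]
  have h : (fun i => ((hA.eigenvalues i ^ (0:ℝ) : ℝ) : ℂ)) = fun _ => (1 : ℂ) := by
    funext i; simp [Real.rpow_zero]
  rw [h, Matrix.diagonal_one, mul_one, Matrix.mem_unitaryGroup_iff.mp hA.eigenvectorUnitary.2]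

lemma trace_young {A K : Matrix m m ℂ} (hA : A.PosSemidef) (hK : K.PosSemidef)
    {p q : ℝ} (hp : 1 < p) (hq : 1 < q) (hpq : 1 / p + 1 / q = 1) :
    (Matrix.trace (A * K)).re
      ≤ (∑ i, hA.1.eigenvalues i ^ p) / p + (∑ j, hK.1.eigenvalues j ^ q) / q := by
  classical
  set U : Matrix.unitaryGroup m ℂ := hA.1.eigenvectorUnitary with hU
  set V : Matrix.unitaryGroup m ℂ := hK.1.eigenvectorUnitary with hV
  set a : m → ℝ := hA.1.eigenvalues with ha
  set μ : m → ℝ := hK.1.eigenvalues with hμ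
  set Wm : Matrix m m ℂ := star (U : Matrix m m ℂ) * (V : Matrix m m ℂ) with hWm
  have hWmem : Wm ∈ Matrix.unitaryGroup m ℂ := mul_mem (Unitary.star_mem U.2) V.2
  set w : m → m → ℝ := fun i j => Complex.normSq (Wm i j) with hw
  have hw0 : ∀ i j, 0 ≤ w i j := fun i j => Complex.normSq_nonneg _
  have ha0 : ∀ i, 0 ≤ a i := fun i => hA.eigenvalues_nonneg i
  have hμ0 : ∀ j, 0 ≤ μ j := fun j => hK.eigenvalues_nonneg j
  have hrow : ∀ i, ∑ j, w i j = 1 := by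
    intro i
    have h1 := congrFun (congrFun (Matrix.mem_unitaryGroup_iff.mp hWmem) i) i
    have h2 : ((∑ j, w i j : ℝ) : ℂ) = 1 := by
      rw [Complex.ofReal_sum]
      simpa [Matrix.mul_apply, Matrix.star_apply, Complex.star_def, Complex.mul_conj,
        Matrix.one_apply, w] using h1
    exact_mod_cast h2
  have hcol : ∀ j, ∑ i, w i j = 1 := by
    intro j
    have h1 := congrFun (congrFun (Matrix.mem_unitaryGroup_iff'.mp hWmem) j) j
    have h2 : ((∑ i, w i j : ℝ) : ℂ) = 1 := by
      rw [Complex.ofReal_sum]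
      simpa [Matrix.mul_apply, Matrix.star_apply, Complex.star_def, Complex.mul_conj,
        Matrix.one_apply, w, ← Complex.normSq_eq_conj_mul_self] using h1
    exact_mod_cast h2
  set k : m → ℝ := fun i => ∑ j, w i j * μ j with hk
  have hk0 : ∀ i, 0 ≤ k i := fun i =>
    Finset.sum_nonneg fun j _ => mul_nonneg (hw0 i j) (hμ0 j)
  set Da : Matrix m m ℂ := Matrix.diagonal (fun i => ((a i : ℝ) : ℂ)) with hDa
  set Dμ : Matrix m m ℂ := Matrix.diagonal (fun j => ((μ j : ℝ) : ℂ)) with hDμ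
  have hsW : star Wm = star (V : Matrix m m ℂ) * (U : Matrix m m ℂ) := by
    simp only [hWm, StarMul.star_mul, star_star]
  -- trace computation
  have hAe : A = (U : Matrix m m ℂ) * Da * star (U : Matrix m m ℂ) := herm_decomp hA.1
  have hKe : K = (V : Matrix m m ℂ) * Dμ * star (V : Matrix m m ℂ) := herm_decomp hK.1
  have t1 : Matrix.trace (A * K) = Matrix.trace (Da * (star (U : Matrix m m ℂ) * K *
      (U : Matrix m m ℂ))) := by
    conv_lhs => rw [hAe]
    rw [show ((U : Matrix m m ℂ) * Da * star (U : Matrix m m ℂ)) * K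
        = (U : Matrix m m ℂ) * (Da * (star (U : Matrix m m ℂ) * K)) by
      simp only [mul_assoc]]
    rw [Matrix.trace_mul_comm]
    rw [show (Da * (star (U : Matrix m m ℂ) * K)) * (U : Matrix m m ℂ)
        = Da * (star (U : Matrix m m ℂ) * K * (U : Matrix m m ℂ)) by
      simp only [mul_assoc]]
  have t2 : star (U : Matrix m m ℂ) * K * (U : Matrix m m ℂ) = Wm * Dμ * star Wm := by
    conv_lhs => rw [hKe]
    rw [hsW, hWm]
    simp only [mul_assoc]
  have hNe : ∀ i, (Wm * Dμ * star Wm) i i = ((k i : ℝ) : ℂ) := by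
    intro i
    rw [Matrix.mul_apply]
    have h3 : ∀ j, (Wm * Dμ) i j * (star Wm) j i = ((w i j * μ j : ℝ) : ℂ) := by
      intro j
      rw [Matrix.mul_diagonal, Matrix.star_apply, Complex.star_def,
        mul_comm (Wm i j) ((μ j : ℝ) : ℂ), mul_assoc, Complex.mul_conj]
      push_cast
      ring
    rw [Finset.sum_congr rfl fun j _ => h3 j, ← Complex.ofReal_sum]
  have t3 : Matrix.trace (Da * (Wm * Dμ * star Wm)) = ((∑ i, a i * k i : ℝ) : ℂ) := by
    rw [Matrix.trace]
    rw [Complex.ofReal_sum]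
    congr 1
    funext i
    rw [Matrix.diag]
    rw [Matrix.diagonal_mul, hNe i]
    push_cast
    ring
  have hre : (Matrix.trace (A * K)).re = ∑ i, a i * k i := by
    rw [t1, t2, t3, Complex.ofReal_re]
  rw [hre]
  -- Young's inequality pointwise
  have hcj : Real.HolderConjugate p q := Real.holderConjugate_iff.mpr ⟨hp, by simpa [one_div] using hpq⟩
  have young : ∀ i, a i * k i ≤ a i ^ p / p + k i ^ q / q := fun i =>
    Real.young_inequality_of_nonneg (ha0 i) (hk0 i) hcj
  have step1 : ∑ i, a i * k i ≤ (∑ i, a i ^ p) / p + (∑ i, k i ^ q) / q := by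
    calc ∑ i, a i * k i ≤ ∑ i, (a i ^ p / p + k i ^ q / q) :=
          Finset.sum_le_sum fun i _ => young i
      _ = (∑ i, a i ^ p) / p + (∑ i, k i ^ q) / q := by
          rw [Finset.sum_add_distrib, Finset.sum_div, Finset.sum_div]
  have step2 : ∑ i, k i ^ q ≤ ∑ j, μ j ^ q := by
    have per : ∀ i, k i ^ q ≤ ∑ j, w i j * μ j ^ q := fun i =>
      Real.rpow_arith_mean_le_arith_mean_rpow Finset.univ (w i) μ
        (fun j _ => hw0 i j) (hrow i) (fun j _ => hμ0 j) hq.le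
    calc ∑ i, k i ^ q ≤ ∑ i, ∑ j, w i j * μ j ^ q := Finset.sum_le_sum fun i _ => per i
      _ = ∑ j, (∑ i, w i j) * μ j ^ q := by
          rw [Finset.sum_comm]
          exact Finset.sum_congr rfl fun j _ => (Finset.sum_mul _ _ _).symm
      _ = ∑ j, μ j ^ q := by
          exact Finset.sum_congr rfl fun j _ => by rw [hcol j, one_mul]
  have hq0 : 0 < q := lt_trans one_pos hq
  calc ∑ i, a i * k i ≤ (∑ i, a i ^ p) / p + (∑ i, k i ^ q) / q := step1
    _ ≤ (∑ i, a i ^ p) / p + (∑ j, μ j ^ q) / q := by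
        gcongr
  
end QAux

set_option maxHeartbeats 1000000 in
/-- For `α > 1`, the supremum over positive semidefinite `H` of `f_α(H,ρ,σ)` equals
`Q̃_α(ρ‖σ)` and is attained at `Ĥ = σ^γ (σ^γ ρ σ^γ)^{α−1} σ^γ`, `γ = (1−α)/(2α)`. -/
theorem fAlpha_sup_eq_Qt {n : ℕ}
    (α : ℝ) (hα : 1 < α)
    (ρ σ : Matrix (Fin n) (Fin n) ℂ) (hρ : IsDensity ρ) (hσ : σ.PosDef) :
    (∀ H : Matrix (Fin n) (Fin n) ℂ, H.PosSemidef →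
        fAlpha α H ρ σ ≤ (Qt α ρ σ).re) ∧
      fAlpha α
        (mpow σ ((1 - α) / (2 * α)) *
          mpow (mpow σ ((1 - α) / (2 * α)) * ρ * mpow σ ((1 - α) / (2 * α))) (α - 1) *
          mpow σ ((1 - α) / (2 * α))) ρ σ
        = (Qt α ρ σ).re := by
  have hα0 : (0 : ℝ) < α := lt_trans one_pos hα
  have hα1 : α - 1 ≠ 0 := sub_ne_zero.mpr (ne_of_gt hα)
  have hq1 : 1 < α / (α - 1) := by
    rw [lt_div_iff₀ (sub_pos.mpr hα)]; linarith
  have hpq : 1 / α + 1 / (α / (α - 1)) = 1 := by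
    rw [one_div_div]; field_simp; ring
  set γ : ℝ := (1 - α) / (2 * α) with hγ
  set S : Matrix (Fin n) (Fin n) ℂ := mpow σ γ with hS
  set T : Matrix (Fin n) (Fin n) ℂ := mpow σ (-γ) with hT
  have hST : S * T = 1 := by
    rw [hS, hT, QAux.mpow_add hσ, show γ + -γ = 0 from by ring, QAux.mpow_zero hσ.1]
  have hTS : T * S = 1 := by
    rw [hS, hT, QAux.mpow_add hσ, show -γ + γ = 0 from by ring, QAux.mpow_zero hσ.1]
  have hSh : S.IsHermitian := QAux.mpow_isHermitian hσ.1 γ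
  have hTh : T.IsHermitian := QAux.mpow_isHermitian hσ.1 (-γ)
  set A : Matrix (Fin n) (Fin n) ℂ := S * ρ * S with hA
  have hAps : A.PosSemidef := by
    have h := hρ.1.mul_mul_conjTranspose_same S
    rwa [hSh.eq] at h
  set a : Fin n → ℝ := hAps.1.eigenvalues with ha
  have ha0 : ∀ i, 0 ≤ a i := fun i => hAps.eigenvalues_nonneg i
  have hQre : (Qt α ρ σ).re = ∑ i, a i ^ α := by
    rw [Qt]
    rw [QAux.trace_mpow hAps.1, Complex.ofReal_re]
  have cyc : ∀ X : Matrix (Fin n) (Fin n) ℂ,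
      Matrix.trace (ρ * (S * X * S)) = Matrix.trace (A * X) := by
    intro X
    rw [show ρ * (S * X * S) = (ρ * (S * X)) * S from by simp only [mul_assoc],
      Matrix.trace_mul_comm,
      show S * (ρ * (S * X)) = (S * ρ * S) * X from by simp only [mul_assoc], ← hA]
  constructor
  · intro H hH
    have hKps : (T * H * T).PosSemidef := by
      have h := hH.mul_mul_conjTranspose_same T
      rwa [hTh.eq] at h
    set K : Matrix (Fin n) (Fin n) ℂ := T * H * T with hK
    have hHSK : S * K * S = H := by
      rw [hK, show S * (T * H * T) * S = S * T * H * (T * S) from by simp only [mul_assoc],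
        hST, hTS, one_mul, mul_one]
    have htr : Matrix.trace (ρ * H) = Matrix.trace (A * K) := by
      conv_lhs => rw [← hHSK]
      exact cyc K
    rw [fAlpha, htr, hQre, QAux.trace_mpow hKps.1, Complex.ofReal_re]
    have hty := QAux.trace_young hAps hKps (p := α) (q := α / (α - 1)) hα hq1 hpq
    have h5 : ∀ X P Q : ℝ, X ≤ P / α + Q / (α / (α - 1)) → α * X - (α - 1) * Q ≤ P := by
      intro X P Q hXPQ
      have h3 := mul_le_mul_of_nonneg_left hXPQ hα0.le
      have h4 : α * (P / α + Q / (α / (α - 1))) = P + (α - 1) * Q := by field_simp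
      linarith
    exact h5 _ _ _ hty
  · set B : Matrix (Fin n) (Fin n) ℂ := mpow A (α - 1) with hB
    have hTBT : T * (S * B * S) * T = B := by
      rw [show T * (S * B * S) * T = T * S * B * (S * T) from by simp only [mul_assoc],
        hTS, hST, one_mul, mul_one]
    have hdec : B = (hAps.1.eigenvectorUnitary : Matrix (Fin n) (Fin n) ℂ) *
        Matrix.diagonal (fun i => ((a i ^ (α - 1) : ℝ) : ℂ)) *
        star (hAps.1.eigenvectorUnitary : Matrix (Fin n) (Fin n) ℂ) :=
      QAux.mpow_spec hAps.1 (α - 1)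
    have hBq : mpow B (α / (α - 1)) = mpow A α := by
      rw [QAux.mpow_eq_conj hAps.1.eigenvectorUnitary _ hdec (α / (α - 1)),
        QAux.mpow_spec hAps.1 α]
      have hfun : (fun i => (((a i ^ (α - 1)) ^ (α / (α - 1)) : ℝ) : ℂ))
          = fun i => ((a i ^ α : ℝ) : ℂ) := by
        funext i
        rw [← Real.rpow_mul (ha0 i), show (α - 1) * (α / (α - 1)) = α from by field_simp]
      rw [hfun]
    have hABtr : Matrix.trace (A * B) = ((∑ i, a i ^ α : ℝ) : ℂ) := by
      conv_lhs => rw [QAux.herm_decomp hAps.1, hdec]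
      rw [QAux.conj_mul, Matrix.diagonal_mul_diagonal, QAux.trace_conj, Matrix.trace_diagonal]
      have hterm : ∀ i, ((hAps.1.eigenvalues i : ℝ) : ℂ) * ((a i ^ (α - 1) : ℝ) : ℂ)
          = ((a i ^ α : ℝ) : ℂ) := by
        intro i
        rw [← Complex.ofReal_mul]
        congr 1
        rcases eq_or_lt_of_le (ha0 i) with h | h
        · have h0 : hAps.1.eigenvalues i = 0 := h.symm
          rw [h0, zero_mul, ← h, Real.zero_rpow (show α ≠ 0 by linarith)]
        · rw [show hAps.1.eigenvalues i * hAps.1.eigenvalues i ^ (α - 1)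
              = hAps.1.eigenvalues i ^ (1:ℝ) * hAps.1.eigenvalues i ^ (α - 1) from by
            rw [Real.rpow_one], ← Real.rpow_add h]
          norm_num
      rw [Finset.sum_congr rfl fun i _ => hterm i, ← Complex.ofReal_sum]
    rw [fAlpha, hTBT, hBq, cyc B, hABtr, hQre, QAux.trace_mpow hAps.1]
    simp only [Complex.ofReal_re]
    ring
end

section
/- Let α ∈ [1/2,1)∪(1,∞) and γ = (1−α)/(2α). If positive definite ρ_{AB}, σ_{AB} on H_A ⊗ H_B satisfy σ_A^γ (σ_A^γ ρ_A σ_A^γ)^{α−1} σ_A^γ ⊗ 1_B = σ_{AB}^γ (σ_{AB}^γ ρ_{AB} σ_{AB}^γ)^{α−1} σ_{AB}^γ, then Q̃_α(ρ_{AB}‖σ_{AB}) = Q̃_α(ρ_A‖σ_A). -/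
open scoped Matrix ComplexOrder Kronecker

/-- Partial trace over the second tensor factor. -/
noncomputable def ptraceB {m d : Type*} [Fintype d]
    (ρ : Matrix (m × d) (m × d) ℂ) : Matrix m m ℂ :=
  Matrix.of fun i j => ∑ k, ρ (i, k) (j, k)

section Aux

open Matrix

set_option linter.unusedSectionVars false
set_option linter.unusedVariables false

variable {n : Type*} [Fintype n] [DecidableEq n]

lemma posDef_conj_of_injective {A B : Matrix n n ℂ} (hA : A.PosDef)
    (hB : Function.Injective (B.mulVec)) : (Bᴴ * A * B).PosDef := by
  refine PosDef.of_dotProduct_mulVec_pos ?_ ?_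
  · exact isHermitian_conjTranspose_mul_mul B hA.1
  · intro x hx
    have hBx : B *ᵥ x ≠ 0 := fun h => hx (hB (by rw [h, mulVec_zero]))
    simpa only [star_mulVec, dotProduct_mulVec, vecMul_vecMul] using hA.dotProduct_mulVec_pos hBx

lemma mpow_isHermitian {A : Matrix n n ℂ} (hA : A.IsHermitian) (r : ℝ) :
    (mpow A r).IsHermitian := by
  rw [mpow, dif_pos hA]
  unfold Matrix.IsHermitian
  simp [Matrix.conjTranspose_mul, Matrix.diagonal_conjTranspose, mul_assoc]
  congr 1
  ext i j
  simp [Matrix.diagonal, Complex.conj_ofReal]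

lemma unitary_mulVec_injective {A : Matrix n n ℂ} (hA : A.IsHermitian) :
    Function.Injective ((hA.eigenvectorUnitary : Matrix n n ℂ)ᴴ).mulVec := by
  set U : Matrix n n ℂ := (hA.eigenvectorUnitary : Matrix n n ℂ) with hU
  have h1 : U * Uᴴ = 1 := by
    simpa [Matrix.star_eq_conjTranspose] using
      (Matrix.mem_unitaryGroup_iff.mp hA.eigenvectorUnitary.2)
  intro x y hxy
  have key : ∀ z : n → ℂ, U *ᵥ (Uᴴ *ᵥ z) = z := fun z => by
    rw [Matrix.mulVec_mulVec, h1, Matrix.one_mulVec]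
  rw [← key x, ← key y, hxy]

lemma mpow_posDef {A : Matrix n n ℂ} (hA : A.PosDef) (r : ℝ) :
    (mpow A r).PosDef := by
  rw [mpow, dif_pos hA.1]
  set U : Matrix n n ℂ := (hA.1.eigenvectorUnitary : Matrix n n ℂ) with hU
  have hD : (Matrix.diagonal (fun i => ((hA.1.eigenvalues i ^ r : ℝ) : ℂ))).PosDef := by
    apply Matrix.PosDef.diagonal
    intro i
    have := Real.rpow_pos_of_pos (hA.eigenvalues_pos i) r
    exact_mod_cast this
  have := posDef_conj_of_injective hD (unitary_mulVec_injective hA.1)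
  simpa using this

lemma mpow_mul_base {A : Matrix n n ℂ} (hA : A.PosDef) (r : ℝ) :
    mpow A r * A = mpow A (r + 1) := by
  have h := hA.1
  rw [mpow, dif_pos h, mpow, dif_pos h]
  set U : Matrix n n ℂ := (h.eigenvectorUnitary : Matrix n n ℂ) with hUdef
  have h1 : U * Uᴴ = 1 := by
    simpa [Matrix.star_eq_conjTranspose] using
      (Matrix.mem_unitaryGroup_iff.mp h.eigenvectorUnitary.2)
  have h2 : Uᴴ * A = Matrix.diagonal (RCLike.ofReal ∘ h.eigenvalues) * Uᴴ := by
    have h3 : star U * A * U = Matrix.diagonal (RCLike.ofReal ∘ h.eigenvalues) := by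
      have := h.conjStarAlgAut_star_eigenvectorUnitary
      rwa [Unitary.conjStarAlgAut_apply, Unitary.coe_star, star_star] at this
    rw [Matrix.star_eq_conjTranspose] at h3
    calc Uᴴ * A = Uᴴ * A * (U * Uᴴ) := by rw [h1, mul_one]
      _ = (Uᴴ * A * U) * Uᴴ := by simp only [mul_assoc]
      _ = _ := by rw [h3]
  calc U * Matrix.diagonal (fun i => ((h.eigenvalues i ^ r : ℝ) : ℂ)) * Uᴴ * A
      = U * (Matrix.diagonal (fun i => ((h.eigenvalues i ^ r : ℝ) : ℂ)) * (Uᴴ * A)) := by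
        simp only [mul_assoc]
    _ = U * (Matrix.diagonal (fun i => ((h.eigenvalues i ^ r : ℝ) : ℂ)) *
          Matrix.diagonal (RCLike.ofReal ∘ h.eigenvalues)) * Uᴴ := by
        rw [h2]; simp only [mul_assoc]
    _ = U * Matrix.diagonal (fun i => ((h.eigenvalues i ^ (r + 1) : ℝ) : ℂ)) * Uᴴ := by
        rw [Matrix.diagonal_mul_diagonal]
        have hdiag : (fun i => ((h.eigenvalues i ^ r : ℝ) : ℂ) * (RCLike.ofReal ∘ h.eigenvalues) i)
            = fun i => ((h.eigenvalues i ^ (r + 1) : ℝ) : ℂ) := by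
          funext i
          have hpos := hA.eigenvalues_pos i
          rw [Real.rpow_add hpos, Real.rpow_one]
          simp only [Function.comp_apply, RCLike.ofReal]
          norm_num
        rw [hdiag]

lemma sum_rot {ι κ ν M : Type*} [Fintype ι] [Fintype κ] [Fintype ν] [AddCommMonoid M]
    (f : ι → κ → ν → M) :
    ∑ i, ∑ j, ∑ k, f i j k = ∑ k, ∑ i, ∑ j, f i j k :=
  calc ∑ i, ∑ j, ∑ k, f i j k
      = ∑ i, ∑ k, ∑ j, f i j k := Finset.sum_congr rfl (fun i _ => Finset.sum_comm)
    _ = ∑ k, ∑ i, ∑ j, f i j k := Finset.sum_comm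

variable {m d : Type*} [Fintype m] [Fintype d] [DecidableEq m] [DecidableEq d]

lemma ptraceB_isHermitian {ρ : Matrix (m × d) (m × d) ℂ} (h : ρ.IsHermitian) :
    (ptraceB ρ).IsHermitian := by
  ext i j
  simp only [ptraceB, Matrix.conjTranspose_apply, Matrix.of_apply, star_sum]
  exact Finset.sum_congr rfl fun k _ => h.apply _ _

lemma ptraceB_posDef [Nonempty d] {ρ : Matrix (m × d) (m × d) ℂ} (h : ρ.PosDef) :
    (ptraceB ρ).PosDef := by
  refine PosDef.of_dotProduct_mulVec_pos (ptraceB_isHermitian h.1) fun x hx => ?_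
  classical
  set y : d → ((m × d) → ℂ) := fun k p => if p.2 = k then x p.1 else 0 with hy
  have hk : ∀ k, star (y k) ⬝ᵥ ρ *ᵥ (y k)
      = ∑ i, ∑ j, star (x i) * (ρ (i, k) (j, k) * x j) := by
    intro k
    simp only [dotProduct, Matrix.mulVec, hy, Pi.star_apply,
      Fintype.sum_prod_type, apply_ite (star : ℂ → ℂ), star_zero, mul_ite, mul_zero,
      ite_mul, zero_mul, Finset.sum_ite_irrel, Finset.sum_const_zero,
      Finset.sum_ite_eq', Finset.mem_univ, if_true, Finset.mul_sum]
  have hquad : star x ⬝ᵥ (ptraceB ρ) *ᵥ x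
      = ∑ i, ∑ j, ∑ k, star (x i) * (ρ (i, k) (j, k) * x j) := by
    simp only [dotProduct, Matrix.mulVec, ptraceB, Matrix.of_apply, Pi.star_apply,
      Finset.sum_mul, Finset.mul_sum]
  have hswap : star x ⬝ᵥ (ptraceB ρ) *ᵥ x = ∑ k, star (y k) ⬝ᵥ ρ *ᵥ (y k) := by
    rw [hquad, sum_rot]
    exact Finset.sum_congr rfl fun k _ => (hk k).symm
  rw [hswap]
  obtain ⟨i, hi⟩ := Function.ne_iff.mp hx
  obtain ⟨k₀⟩ := ‹Nonempty d›
  refine Finset.sum_pos' (fun k _ => h.posSemidef.dotProduct_mulVec_nonneg (y k)) ⟨k₀, Finset.mem_univ _, ?_⟩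
  refine h.dotProduct_mulVec_pos (x := y k₀) ?_
  intro hzero
  apply hi
  have := congrFun hzero (i, k₀)
  simpa [hy] using this

lemma trace_kron_one_mul (A : Matrix m m ℂ) (ρ : Matrix (m × d) (m × d) ℂ) :
    ((A ⊗ₖ (1 : Matrix d d ℂ)) * ρ).trace = (A * ptraceB ρ).trace := by
  have lhs : ((A ⊗ₖ (1 : Matrix d d ℂ)) * ρ).trace
      = ∑ i, ∑ k, ∑ j, A i j * ρ (j, k) (i, k) := by
    simp only [Matrix.trace, Matrix.diag_apply, Matrix.mul_apply, Fintype.sum_prod_type,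
      Matrix.kroneckerMap_apply, Matrix.one_apply, mul_ite, mul_zero, mul_one,
      ite_mul, zero_mul, Finset.sum_ite_irrel, Finset.sum_const_zero,
      Finset.sum_ite_eq, Finset.sum_ite_eq', Finset.mem_univ, if_true]
  have rhs : (A * ptraceB ρ).trace = ∑ i, ∑ j, ∑ k, A i j * ρ (j, k) (i, k) := by
    simp only [Matrix.trace, Matrix.diag_apply, Matrix.mul_apply, ptraceB, Matrix.of_apply,
      Finset.mul_sum]
  rw [lhs, rhs]
  exact Finset.sum_congr rfl fun i _ => Finset.sum_comm

lemma key_trace (α : ℝ) {ρ σ : Matrix n n ℂ} (hρ : ρ.PosDef) (hσ : σ.PosDef) :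
    ((mpow σ ((1 - α) / (2 * α)) *
        mpow (mpow σ ((1 - α) / (2 * α)) * ρ * mpow σ ((1 - α) / (2 * α))) (α - 1) *
        mpow σ ((1 - α) / (2 * α))) * ρ).trace = Qt α ρ σ := by
  set γ : ℝ := (1 - α) / (2 * α) with hγ
  set M : Matrix n n ℂ := mpow σ γ with hMdef
  have hMpd : M.PosDef := mpow_posDef hσ γ
  have hMh : Mᴴ = M := hMpd.1
  have hinj : Function.Injective M.mulVec :=
    mulVec_injective_iff_isUnit.2 hMpd.isUnit
  have hX : (M * ρ * M).PosDef := by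
    have := posDef_conj_of_injective hρ hinj
    rwa [hMh] at this
  set X : Matrix n n ℂ := M * ρ * M with hXdef
  have tr1 : (M * mpow X (α - 1) * M * ρ).trace = (mpow X (α - 1) * X).trace := by
    have e1 : M * mpow X (α - 1) * M * ρ = (M * mpow X (α - 1)) * (M * ρ) := by
      simp only [mul_assoc]
    have e2 : (M * ρ) * (M * mpow X (α - 1)) = (M * ρ * M) * mpow X (α - 1) := by
      simp only [mul_assoc]
    rw [e1, Matrix.trace_mul_comm, e2, ← hXdef, Matrix.trace_mul_comm]
  rw [tr1, mpow_mul_base hX (α - 1)]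
  have h1 : α - 1 + 1 = α := by ring
  rw [h1]
  rfl

end Aux

/-- Sufficiency direction of the equality condition for monotonicity of `Q̃_α`
under partial trace: the operator identity
`σ_A^γ (σ_A^γ ρ_A σ_A^γ)^{α−1} σ_A^γ ⊗ 1_B = σ_{AB}^γ (σ_{AB}^γ ρ_{AB} σ_{AB}^γ)^{α−1} σ_{AB}^γ`
implies `Q̃_α(ρ_{AB}‖σ_{AB}) = Q̃_α(ρ_A‖σ_A)`. -/
theorem Qt_eq_of_operator_identity {m d : ℕ}
    (α : ℝ) (hα : (1 / 2 ≤ α ∧ α < 1) ∨ 1 < α)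
    (ρAB σAB : Matrix (Fin m × Fin d) (Fin m × Fin d) ℂ)
    (hρ : IsDensity ρAB) (hρpd : ρAB.PosDef) (hσpd : σAB.PosDef)
    (hid : (mpow (ptraceB σAB) ((1 - α) / (2 * α)) *
          mpow (mpow (ptraceB σAB) ((1 - α) / (2 * α)) * ptraceB ρAB *
            mpow (ptraceB σAB) ((1 - α) / (2 * α))) (α - 1) *
          mpow (ptraceB σAB) ((1 - α) / (2 * α))) ⊗ₖ (1 : Matrix (Fin d) (Fin d) ℂ)
        = mpow σAB ((1 - α) / (2 * α)) *
            mpow (mpow σAB ((1 - α) / (2 * α)) * ρAB *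
              mpow σAB ((1 - α) / (2 * α))) (α - 1) *
            mpow σAB ((1 - α) / (2 * α))) :
    Qt α ρAB σAB = Qt α (ptraceB ρAB) (ptraceB σAB) := by
  haveI : Nonempty (Fin d) := by
    rcases Nat.eq_zero_or_pos d with hd | hd
    · exfalso
      subst hd
      have h1 := hρ.2
      simp [Matrix.trace] at h1
    · exact ⟨⟨0, hd⟩⟩
  have hρA : (ptraceB ρAB).PosDef := ptraceB_posDef hρpd
  have hσA : (ptraceB σAB).PosDef := ptraceB_posDef hσpd
  calc Qt α ρAB σAB
      = ((mpow σAB ((1 - α) / (2 * α)) *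
            mpow (mpow σAB ((1 - α) / (2 * α)) * ρAB *
              mpow σAB ((1 - α) / (2 * α))) (α - 1) *
            mpow σAB ((1 - α) / (2 * α))) * ρAB).trace := (key_trace α hρpd hσpd).symm
    _ = (((mpow (ptraceB σAB) ((1 - α) / (2 * α)) *
          mpow (mpow (ptraceB σAB) ((1 - α) / (2 * α)) * ptraceB ρAB *
            mpow (ptraceB σAB) ((1 - α) / (2 * α))) (α - 1) *
          mpow (ptraceB σAB) ((1 - α) / (2 * α))) ⊗ₖ (1 : Matrix (Fin d) (Fin d) ℂ)) *
            ρAB).trace := by rw [hid]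
    _ = ((mpow (ptraceB σAB) ((1 - α) / (2 * α)) *
          mpow (mpow (ptraceB σAB) ((1 - α) / (2 * α)) * ptraceB ρAB *
            mpow (ptraceB σAB) ((1 - α) / (2 * α))) (α - 1) *
          mpow (ptraceB σAB) ((1 - α) / (2 * α))) * ptraceB ρAB).trace :=
        trace_kron_one_mul _ _
    _ = Qt α (ptraceB ρAB) (ptraceB σAB) := key_trace α hρA hσA
end

section
/- Assuming the data processing inequality for D̃_β under partial trace and the duality S̃_α(A|B)_ρ = −S̃_β(A|C)_ρ for a purification ρ_{ABC} with 1/α + 1/β = 2, the Rényi Araki–Lieb lower bound holds: S̃_α(A|B)_ρ ≥ −S_β(A)_ρ for α, β ∈ [1/2, ∞) with 1/α + 1/β = 2. -/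
open scoped Matrix ComplexOrder Kronecker

/-- The α-sandwiched Rényi divergence `D̃_α(ρ‖σ)` (for a state `ρ`, so `tr ρ = 1`). -/
noncomputable def DA {m : Type*} [Fintype m] [DecidableEq m]
    (α : ℝ) (ρ σ : Matrix m m ℂ) : ℝ :=
  (1 / (α - 1)) * Real.logb 2 (Qt α ρ σ).re

/-- `supp ρ ⊆ supp σ`, phrased via kernels. -/
def KerIncl {m : Type*} [Fintype m] (ρ σ : Matrix m m ℂ) : Prop :=
  ∀ v, σ.mulVec v = 0 → ρ.mulVec v = 0

/-- `ρ` and `σ` are not orthogonal: their supports overlap. -/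
def NotPerp {m : Type*} [Fintype m] (ρ σ : Matrix m m ℂ) : Prop :=
  ∃ v, v ≠ 0 ∧ v ∈ LinearMap.range ρ.mulVecLin ⊓ LinearMap.range σ.mulVecLin

/-- Finiteness condition for `D̃_α(ρ‖σ)`: `supp ρ ⊆ supp σ` if `α > 1`,
and `ρ ⊥̸ σ` if `α < 1`. -/
def Feas {m : Type*} [Fintype m] (α : ℝ) (ρ σ : Matrix m m ℂ) : Prop :=
  (1 < α → KerIncl ρ σ) ∧ (α < 1 → NotPerp ρ σ)

/-- The α-Rényi conditional entropy `S̃_α(A|B)_ρ = −min_{σ_B} D̃_α(ρ_{AB}‖1_A ⊗ σ_B)`,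
the minimum being over density matrices `σ_B` for which the divergence is finite. -/
noncomputable def condS {a b : ℕ} (α : ℝ)
    (ρAB : Matrix (Fin a × Fin b) (Fin a × Fin b) ℂ) : ℝ :=
  -sInf {x | ∃ σB : Matrix (Fin b) (Fin b) ℂ, IsDensity σB ∧
      Feas α ρAB ((1 : Matrix (Fin a) (Fin a) ℂ) ⊗ₖ σB) ∧
      x = DA α ρAB ((1 : Matrix (Fin a) (Fin a) ℂ) ⊗ₖ σB)}

/-- The Rényi entropy `S_α(ρ) = (1/(1−α)) log₂ tr(ρ^α)`. -/
noncomputable def SR {m : Type*} [Fintype m] [DecidableEq m]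
    (α : ℝ) (ρ : Matrix m m ℂ) : ℝ :=
  (1 / (1 - α)) * Real.logb 2 (Matrix.trace (mpow ρ α)).re

/-- Partial trace over the third factor of a tripartite system. -/
noncomputable def ptrC3 {a b c : Type*} [Fintype c]
    (M : Matrix (a × b × c) (a × b × c) ℂ) : Matrix (a × b) (a × b) ℂ :=
  Matrix.of fun p q => ∑ k, M (p.1, p.2, k) (q.1, q.2, k)

/-- Partial trace over the middle factor of a tripartite system. -/
noncomputable def ptrB3 {a b c : Type*} [Fintype b]
    (M : Matrix (a × b × c) (a × b × c) ℂ) : Matrix (a × c) (a × c) ℂ :=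
  Matrix.of fun p q => ∑ j, M (p.1, j, p.2) (q.1, j, q.2)


section Aux

open Matrix

lemma eig_one {m : Type*} [Fintype m] [DecidableEq m]
    (h1 : (1 : Matrix m m ℂ).IsHermitian) (i : m) : h1.eigenvalues i = 1 := by
  have hs := h1.spectral_theorem
  set U : Matrix m m ℂ := (h1.eigenvectorUnitary : Matrix m m ℂ) with hU
  set D : Matrix m m ℂ := Matrix.diagonal (RCLike.ofReal ∘ h1.eigenvalues) with hD
  have hu : star U * U = 1 := (Matrix.mem_unitaryGroup_iff').mp (h1.eigenvectorUnitary).2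
  have h2 : star U * (1 : Matrix m m ℂ) * U = D := by
    conv_lhs => rw [hs]
    simp only [Unitary.conjStarAlgAut_apply, Unitary.coe_star]
    rw [← hU]
    rw [show star U * (U * D * star U) * U = (star U * U) * D * (star U * U) by noncomm_ring,
      hu, one_mul, mul_one]
  have hd : D = 1 := by rw [← h2, mul_one, hu]
  have := congrFun (congrFun hd i) i
  simp [hD, Matrix.diagonal_apply_eq, Matrix.one_apply_eq] at this
  exact_mod_cast this

lemma mpow_one_left {m : Type*} [Fintype m] [DecidableEq m] (r : ℝ) :
    mpow (1 : Matrix m m ℂ) r = 1 := by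
  rw [mpow, dif_pos Matrix.isHermitian_one]
  have h1 : (1 : Matrix m m ℂ).IsHermitian := Matrix.isHermitian_one
  have : (fun i => ((h1.eigenvalues i ^ r : ℝ) : ℂ)) = fun _ => (1 : ℂ) := by
    funext i; rw [eig_one h1 i, Real.one_rpow]; norm_num
  rw [this, Matrix.diagonal_one, mul_one, ← Matrix.star_eq_conjTranspose,
    (Matrix.mem_unitaryGroup_iff).mp (h1.eigenvectorUnitary).2]

lemma DA_one {m : Type*} [Fintype m] [DecidableEq m] (β : ℝ) (ρ : Matrix m m ℂ) :
    DA β ρ 1 = -(SR β ρ) := by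
  unfold DA SR Qt
  rw [mpow_one_left, mul_one, one_mul,
    show (1:ℝ)/(β-1) = -(1/(1-β)) by rw [show (1:ℝ)-β = -(β-1) by ring, div_neg, neg_neg]]
  ring

lemma ptraceB_one_kron {m d : Type*} [Fintype m] [Fintype d] [DecidableEq m]
    (σ : Matrix d d ℂ) (hσ : σ.trace = 1) :
    ptraceB ((1 : Matrix m m ℂ) ⊗ₖ σ) = 1 := by
  ext i j
  simp only [ptraceB, Matrix.of_apply, Matrix.kroneckerMap_apply]
  by_cases h : i = j <;> simp [Matrix.one_apply, h]
  exact hσ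

lemma one_kron_psd {m d : Type*} [Fintype m] [Fintype d] [DecidableEq m]
    {σ : Matrix d d ℂ} (hσ : σ.PosSemidef) :
    ((1 : Matrix m m ℂ) ⊗ₖ σ).PosSemidef := by
  refine Matrix.posSemidef_iff_dotProduct_mulVec.mpr ⟨?_, ?_⟩
  · ext ⟨i, k⟩ ⟨j, l⟩
    simp only [Matrix.conjTranspose_apply, Matrix.kroneckerMap_apply, Matrix.one_apply]
    by_cases h : i = j
    · subst h
      simp only [if_true, eq_self_iff_true, one_mul, star_mul', star_one, mul_one]
      rw [← Matrix.conjTranspose_apply σ, hσ.1]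
    · simp [h, Ne.symm h]
  · intro x
    have key : dotProduct (star x) (((1 : Matrix m m ℂ) ⊗ₖ σ) *ᵥ x)
        = ∑ i : m, dotProduct (star fun k => x (i, k)) (σ *ᵥ fun k => x (i, k)) := by
      simp only [dotProduct, Matrix.mulVec, Pi.star_apply, Fintype.sum_prod_type,
        Matrix.kroneckerMap_apply, Matrix.one_apply, ite_mul, one_mul, zero_mul]
      congr 1; funext i
      congr 1; funext k
      congr 1
      rw [Finset.sum_comm]
      simp
    rw [key]
    exact Finset.sum_nonneg fun i _ => hσ.dotProduct_mulVec_nonneg _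

lemma ptraceB_ptrB3 {a b c : Type*} [Fintype b] [Fintype c]
    (M : Matrix (a × b × c) (a × b × c) ℂ) :
    ptraceB (ptrB3 M) = ptraceB (ptrC3 M) := by
  ext i j
  simp only [ptraceB, ptrB3, ptrC3, Matrix.of_apply]
  exact Finset.sum_comm

lemma trace_ptrB3 {a b c : Type*} [Fintype a] [Fintype b] [Fintype c]
    (ψ : a × b × c → ℂ) (hψ : star ψ ⬝ᵥ ψ = 1) :
    (ptrB3 (Matrix.vecMulVec ψ (star ψ))).trace = 1 := by
  simp only [Matrix.trace, Matrix.diag, ptrB3, Matrix.of_apply, Matrix.vecMulVec_apply,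
    Pi.star_apply]
  rw [← hψ]
  simp only [dotProduct, Pi.star_apply, Fintype.sum_prod_type]
  congr 1; funext i
  rw [Finset.sum_comm]
  congr 1; funext j
  congr 1; funext k
  ring

lemma psd_ptrB3 {a b c : Type*} [Fintype a] [Fintype b] [Fintype c]
    (ψ : a × b × c → ℂ) :
    (ptrB3 (Matrix.vecMulVec ψ (star ψ))).PosSemidef := by
  have : ptrB3 (Matrix.vecMulVec ψ (star ψ)) =
      (Matrix.of fun (j : b) (p : a × c) => star (ψ (p.1, j, p.2)))ᴴ *
      (Matrix.of fun (j : b) (p : a × c) => star (ψ (p.1, j, p.2))) := by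
    ext p q
    simp [ptrB3, Matrix.mul_apply, Matrix.conjTranspose_apply, Matrix.vecMulVec_apply]
  rw [this]
  exact Matrix.posSemidef_conjTranspose_mul_self _

end Aux

/-- The Rényi Araki–Lieb lower bound `S̃_α(A|B)_ρ ≥ −S_β(A)_ρ` for `1/α + 1/β = 2`,
assuming the duality `S̃_α(A|B)_ρ = −S̃_β(A|C)_ρ` for a purification `ρ_{ABC}` and the
data processing inequality for `D̃_β` under partial trace. -/
theorem renyi_araki_lieb {a b c : ℕ}
    (α β : ℝ) (hαhalf : 1 / 2 ≤ α) (hβhalf : 1 / 2 ≤ β)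
    (hdual' : 1 / α + 1 / β = 2)
    (ψ : Fin a × Fin b × Fin c → ℂ) (hψ : star ψ ⬝ᵥ ψ = 1)
    (ρAB : Matrix (Fin a × Fin b) (Fin a × Fin b) ℂ)
    (hρAB : ρAB = ptrC3 (Matrix.vecMulVec ψ (star ψ)))
    (hdual : condS α ρAB = -condS β (ptrB3 (Matrix.vecMulVec ψ (star ψ))))
    (hDPI : ∀ (ρ' σ' : Matrix (Fin a × Fin c) (Fin a × Fin c) ℂ),
        IsDensity ρ' → σ'.PosSemidef → Feas β ρ' σ' →
        DA β (ptraceB ρ') (ptraceB σ') ≤ DA β ρ' σ') :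
    -SR β (ptraceB ρAB) ≤ condS α ρAB := by
  classical
  -- the AC reduced state
  set ρAC : Matrix (Fin a × Fin c) (Fin a × Fin c) ℂ :=
    ptrB3 (Matrix.vecMulVec ψ (star ψ)) with hρAC
  have hdens : IsDensity ρAC := ⟨psd_ptrB3 ψ, trace_ptrB3 ψ hψ⟩
  -- the index type is nonempty
  have hne : Nonempty (Fin a × Fin b × Fin c) := by
    by_contra h
    rw [not_nonempty_iff] at h
    have h0 : star ψ ⬝ᵥ ψ = 0 := by
      simp [dotProduct, Finset.univ_eq_empty]
    rw [hψ] at h0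
    exact one_ne_zero h0
  have hcpos : 0 < c := by
    rcases hne with ⟨⟨_, _, k⟩⟩
    exact k.pos
  have hcC : (c : ℂ) ≠ 0 := by exact_mod_cast hcpos.ne'
  -- the candidate σC : maximally mixed state
  set σ₀ : Matrix (Fin c) (Fin c) ℂ := ((c : ℂ)⁻¹) • 1 with hσ₀
  have hkr : (1 : Matrix (Fin a) (Fin a) ℂ) ⊗ₖ σ₀
      = ((c : ℂ)⁻¹) • (1 : Matrix (Fin a × Fin c) (Fin a × Fin c) ℂ) := by
    rw [hσ₀, Matrix.kronecker_smul, Matrix.one_kronecker_one]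
  have hσ₀dens : IsDensity σ₀ := by
    constructor
    · rw [hσ₀, Matrix.smul_one_eq_diagonal]
      refine Matrix.PosSemidef.diagonal fun i => ?_
      rw [show ((c : ℂ)⁻¹) = (((c : ℝ)⁻¹ : ℝ) : ℂ) by push_cast; ring]
      exact Complex.zero_le_real.mpr (by positivity)
    · rw [hσ₀, Matrix.trace_smul, Matrix.trace_one]
      simp [Fintype.card_fin, inv_mul_cancel₀ hcC]
  have hfeas₀ : Feas β ρAC ((1 : Matrix (Fin a) (Fin a) ℂ) ⊗ₖ σ₀) := by
    constructor
    · intro _ v hv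
      rw [hkr, Matrix.smul_mulVec, Matrix.one_mulVec] at hv
      have hv0 : v = 0 := by
        rcases smul_eq_zero.mp hv with h | h
        · exact absurd h (inv_ne_zero hcC)
        · exact h
      rw [hv0, Matrix.mulVec_zero]
    · intro _
      have hρne : ρAC ≠ 0 := by
        intro h
        have := hdens.2
        rw [h, Matrix.trace_zero] at this
        exact one_ne_zero this.symm
      have hex : ∃ u, ρAC *ᵥ u ≠ 0 := by
        by_contra h
        push_neg at h
        apply hρne
        ext p q
        have := congrFun (h (Pi.single q 1)) p
        simpa [Matrix.mulVec_single] using this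
      obtain ⟨u, hu⟩ := hex
      refine ⟨ρAC *ᵥ u, hu, Submodule.mem_inf.mpr ⟨⟨u, rfl⟩, ⟨(c : ℂ) • (ρAC *ᵥ u), ?_⟩⟩⟩
      rw [Matrix.mulVecLin_apply, hkr, Matrix.smul_mulVec, Matrix.one_mulVec,
        smul_smul, inv_mul_cancel₀ hcC, one_smul]
  -- the feasible set
  set S : Set ℝ := {x | ∃ σB : Matrix (Fin c) (Fin c) ℂ, IsDensity σB ∧
      Feas β ρAC ((1 : Matrix (Fin a) (Fin a) ℂ) ⊗ₖ σB) ∧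
      x = DA β ρAC ((1 : Matrix (Fin a) (Fin a) ℂ) ⊗ₖ σB)} with hS
  have hSne : S.Nonempty := ⟨_, ⟨σ₀, hσ₀dens, hfeas₀, rfl⟩⟩
  have hbound : ∀ x ∈ S, -SR β (ptraceB ρAB) ≤ x := by
    rintro x ⟨σC, hσC, hfeas, rfl⟩
    have h1 := hDPI ρAC ((1 : Matrix (Fin a) (Fin a) ℂ) ⊗ₖ σC) hdens
      (one_kron_psd hσC.1) hfeas
    rw [ptraceB_one_kron σC hσC.2] at h1
    have h2 : ptraceB ρAC = ptraceB ρAB := by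
      rw [hρAC, hρAB, ptraceB_ptrB3]
    rw [h2, DA_one] at h1
    exact h1
  rw [hdual]
  show -SR β (ptraceB ρAB) ≤ -condS β ρAC
  unfold condS
  rw [neg_neg]
  exact le_csInf hSne hbound
end
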